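/- arXiv:1406.7860 — 8 statements merged into one kernel-verified Lean document; each statement's English description precedes it below -/
import Mathlib

section
/- Let n ≥ 1 and let α and β be functions assigning a rational number to every 0-1 word of length n, related by α_F = Σ_{E ≤ F} β_E for all 0-1 words F of length n (the sum over all words E of length n with E ≤ F). Then α satisfies the Bayer–Billera relations if and only if β satisfies the dual Bayer–Billera relations. -/
/-- `chk E` is the word `E` with its last letter flipped (`chk [] = []`). -/
def chk : List Bool → List Bool
  | [] => []
  | [b] => [!b]
  | b :: c :: rest => b :: chk (c :: rest)

/-- `comp E` is the complementary word, with every letter flipped. -/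
def comp (E : List Bool) : List Bool := E.map (!·)

/-- `Eij i j` is the word `0^(i-1) 1 0^(j-i)`. -/
def Eij (i j : ℕ) : List Bool :=
  List.replicate (i - 1) false ++ [true] ++ List.replicate (j - i) false

/-- The word `0^j`. -/
def zeros (j : ℕ) : List Bool := List.replicate j false

/-- The word `1^j`. -/
def ones (j : ℕ) : List Bool := List.replicate j true

/-- `β` satisfies the dual Bayer–Billera relations (for words of length `n`). -/
def DualBB (n : ℕ) (β : List Bool → ℚ) : Prop :=
  ∀ E F : List Bool, E.length + F.length = n →
    β (E ++ F) + β (chk E ++ F) = β (E ++ comp F) + β (chk E ++ comp F)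

/-- `α` satisfies the Bayer–Billera relations (for words of length `n`). -/
def BB (n : ℕ) (α : List Bool → ℚ) : Prop :=
  ∀ (j : ℕ) (E F : List Bool), 1 ≤ j →
    (E = [] ∨ E.getLast? = some true) →
    (F = [] ∨ F.head? = some true) →
    E.length + j + F.length = n →
    ∑ i ∈ Finset.Icc 1 j, (-1 : ℚ) ^ (i - 1) * α (E ++ Eij i j ++ F) =
      2 * (if Odd j then 1 else 0) * α (E ++ zeros j ++ F)

/-- The finset of all 0-1 words of length `n`. -/
def allWords : ℕ → Finset (List Bool)
  | 0 => {[]}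
  | n + 1 => (allWords n).image (List.cons false) ∪ (allWords n).image (List.cons true)

/-- Pointwise order on words of equal length (`wleB E F = true` iff `E ≤ F`). -/
def wleB : List Bool → List Bool → Bool
  | [], [] => true
  | a :: E, b :: F => (!a || b) && wleB E F
  | _, _ => false

namespace BBaux

def cnt (w : List Bool) : ℕ := w.count true

def chi (T w : List Bool) : ℚ := (-1) ^ ((T.zip w).countP (fun p => p.1 && p.2))

def ovl (T w : List Bool) : Bool := (T.zip w).any (fun p => p.1 && p.2)

def down (T w : List Bool) : ℚ := if ovl T w then 0 else 2 ^ (cnt w)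

def altQ : List Bool → ℚ
  | [] => 0
  | b :: M => (if b then 1 else 0) - altQ M

def hatF (n : ℕ) (β : List Bool → ℚ) (T : List Bool) : ℚ :=
  ∑ w ∈ allWords n, chi T w * β w

def Bad (T : List Bool) : Prop :=
  ∃ V Q, T = V ++ Q ∧ (V = [] ∨ V.getLast? = some false) ∧ Odd (Q.count true)

lemma mem_allWords {n : ℕ} {w : List Bool} : w ∈ allWords n ↔ w.length = n := by
  induction n generalizing w with
  | zero => simp [allWords, List.length_eq_zero_iff]
  | succ n ih =>
    simp only [allWords, Finset.mem_union, Finset.mem_image]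
    constructor
    · rintro (⟨u, hu, rfl⟩ | ⟨u, hu, rfl⟩) <;> simp [ih.mp hu]
    · intro h
      match w with
      | false :: u => exact Or.inl ⟨u, ih.mpr (by simpa using h), rfl⟩
      | true :: u => exact Or.inr ⟨u, ih.mpr (by simpa using h), rfl⟩

lemma sum_allWords_succ (n : ℕ) (f : List Bool → ℚ) :
    ∑ w ∈ allWords (n+1), f w
      = (∑ w ∈ allWords n, f (false :: w)) + ∑ w ∈ allWords n, f (true :: w) := by
  show ∑ w ∈ (allWords n).image (List.cons false) ∪ (allWords n).image (List.cons true), f w = _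
  rw [Finset.sum_union, Finset.sum_image, Finset.sum_image]
  · intro x _ y _ h; simpa using h
  · intro x _ y _ h; simpa using h
  · rw [Finset.disjoint_left]
    rintro a ha hb
    simp only [Finset.mem_image] at ha hb
    obtain ⟨u, _, rfl⟩ := ha
    obtain ⟨v, _, h⟩ := hb
    simp at h

lemma sum_allWords_append (k m : ℕ) (f : List Bool → ℚ) :
    ∑ w ∈ allWords (k+m), f w = ∑ u ∈ allWords k, ∑ v ∈ allWords m, f (u ++ v) := by
  induction k generalizing f with
  | zero => simp [allWords, show (0:ℕ)+m = m from by omega]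
  | succ k ih =>
    have h1 : k+1+m = (k+m)+1 := by omega
    rw [h1, sum_allWords_succ _ f, sum_allWords_succ k (fun u => ∑ v ∈ allWords m, f (u ++ v)),
      ih (fun w => f (false :: w)), ih (fun w => f (true :: w))]
    simp [List.cons_append]



lemma chi_nil : chi [] [] = 1 := rfl

lemma chi_cons (t b : Bool) (T w : List Bool) :
    chi (t :: T) (b :: w) = (if t && b then -1 else 1) * chi T w := by
  simp only [chi, List.zip_cons_cons, List.countP_cons]
  cases h : (t && b) <;> simp [h, pow_add, pow_succ]

lemma chi_append (T₁ T₂ w₁ w₂ : List Bool) (h : T₁.length = w₁.length) :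
    chi (T₁ ++ T₂) (w₁ ++ w₂) = chi T₁ w₁ * chi T₂ w₂ := by
  simp only [chi, List.zip_append h, List.countP_append, pow_add]

lemma chk_length (u : List Bool) : (chk u).length = u.length := by
  match u with
  | [] => rfl
  | [b] => rfl
  | b :: c :: rest => simp [chk, chk_length (c :: rest)]

lemma chk_chk (u : List Bool) : chk (chk u) = u := by
  match u with
  | [] => rfl
  | [b] => simp [chk]
  | b :: c :: rest =>
    have h := chk_length (c :: rest)
    match hx : chk (c :: rest) with
    | [] => rw [hx] at h; simp at h
    | d :: Y =>
      have h2 : chk (b :: c :: rest) = b :: d :: Y := by rw [chk, hx]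
      rw [h2, chk, ← hx, chk_chk (c :: rest)]

lemma comp_length (u : List Bool) : (comp u).length = u.length := by simp [comp]

lemma comp_comp (u : List Bool) : comp (comp u) = u := by
  simp [comp, List.map_map, Function.comp_def]

lemma chi_chk : ∀ (P u : List Bool), P.length = u.length →
    chi P (chk u) = (if P.getLast? = some true then -1 else 1) * chi P u
  | [], [], _ => by simp [chk]
  | [p], [b], _ => by
    cases p <;> cases b <;> simp [chk, chi_cons, chi_nil] <;> norm_num
  | p :: q :: P'', b :: c :: rest, h => by
    have ih := chi_chk (q :: P'') (c :: rest) (by simpa using h)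
    rw [show chk (b :: c :: rest) = b :: chk (c :: rest) from rfl,
      chi_cons, ih, chi_cons, chi_cons, List.getLast?_cons_cons]
    rw [chi_cons]
    ring

lemma chi_comp : ∀ (Q v : List Bool), Q.length = v.length →
    chi Q (comp v) = (-1) ^ (cnt Q) * chi Q v
  | [], [], _ => by simp [comp, cnt]
  | t :: Q', b :: v', h => by
    have ih := chi_comp Q' v' (by simpa using h)
    rw [show comp (b :: v') = (!b) :: comp v' from rfl, chi_cons, ih, chi_cons]
    have hc : cnt (t :: Q') = (if t then 1 else 0) + cnt Q' := by
      cases t <;> simp [cnt, List.count_cons] <;> omega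
    rw [hc, pow_add]
    cases t <;> cases b <;> norm_num



lemma orth : ∀ (n : ℕ) (w w' : List Bool), w.length = n → w'.length = n →
    (∑ T ∈ allWords n, chi T w * chi T w') = if w = w' then (2:ℚ)^n else 0 := by
  intro n
  induction n with
  | zero =>
    intro w w' hw hw'
    rw [List.length_eq_zero_iff] at hw hw'
    subst hw; subst hw'
    simp [allWords, chi_nil]
  | succ n ih =>
    intro w w' hw hw'
    match w, w' with
    | b :: u, b' :: u' =>
      rw [sum_allWords_succ n (fun T => chi T (b :: u) * chi T (b' :: u'))]
      have hu : u.length = n := by simpa using hw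
      have hu' : u'.length = n := by simpa using hw'
      have e1 : ∀ t : Bool, (∑ T ∈ allWords n, chi (t :: T) (b :: u) * chi (t :: T) (b' :: u'))
          = ((if t && b then -1 else 1) * (if t && b' then -1 else 1)) *
            ∑ T ∈ allWords n, chi T u * chi T u' := by
        intro t
        rw [Finset.mul_sum]
        apply Finset.sum_congr rfl
        intro T _
        rw [chi_cons, chi_cons]
        ring
      rw [e1 false, e1 true, ih u u' hu hu']
      by_cases hb : b = b'
      · subst hb
        by_cases huu : u = u'
        · subst huu
          simp only [if_pos rfl]
          cases b <;> norm_num [pow_succ] <;> ring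
        · have : (b :: u) ≠ (b :: u') := by simp [huu]
          simp only [if_neg huu, if_neg this]
          ring
      · have : (b :: u) ≠ (b' :: u') := by simp [hb]
        rw [if_neg this]
        cases b <;> cases b' <;> simp_all <;> by_cases huu : u = u' <;> simp [huu]

lemma inv_hat (n : ℕ) (β : List Bool → ℚ) (w : List Bool) (hw : w.length = n) :
    β w = (2^n : ℚ)⁻¹ * ∑ T ∈ allWords n, chi T w * hatF n β T := by
  have key : (∑ T ∈ allWords n, chi T w * hatF n β T) = 2^n * β w := by
    unfold hatF
    have : ∀ T, chi T w * ∑ w' ∈ allWords n, chi T w' * β w'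
        = ∑ w' ∈ allWords n, chi T w * chi T w' * β w' := by
      intro T
      rw [Finset.mul_sum]
      apply Finset.sum_congr rfl
      intro w' _
      ring
    simp only [this]
    rw [Finset.sum_comm]
    have : ∀ w' ∈ allWords n, (∑ T ∈ allWords n, chi T w * chi T w' * β w')
        = (if w = w' then (2:ℚ)^n else 0) * β w' := by
      intro w' hw'
      rw [← Finset.sum_mul, orth n w w' hw (mem_allWords.mp hw')]
    rw [Finset.sum_congr rfl this]
    simp only [ite_mul, zero_mul]
    rw [Finset.sum_ite_eq (allWords n) w (fun w' => ((2:ℚ)^n) * β w')]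
    simp [mem_allWords.mpr hw]
  rw [key]
  field_simp

lemma sum_invol (k : ℕ) (g : List Bool → List Bool)
    (hlen : ∀ w : List Bool, w.length = k → (g w).length = k)
    (hinv : ∀ w : List Bool, w.length = k → g (g w) = w)
    (f : List Bool → ℚ) :
    ∑ w ∈ allWords k, f w = ∑ w ∈ allWords k, f (g w) := by
  apply Finset.sum_nbij' (i := g) (j := g)
  · intro a ha; exact mem_allWords.mpr (hlen a (mem_allWords.mp ha))
  · intro a ha; exact mem_allWords.mpr (hlen a (mem_allWords.mp ha))
  · intro a ha; exact hinv a (mem_allWords.mp ha)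
  · intro a ha; exact hinv a (mem_allWords.mp ha)
  · intro a ha; rw [hinv a (mem_allWords.mp ha)]

lemma downSum : ∀ (n : ℕ) (T w : List Bool), T.length = n → w.length = n →
    (∑ e ∈ allWords n, (if wleB e w then chi T e else 0)) = down T w := by
  intro n
  induction n with
  | zero =>
    intro T w hT hw
    rw [List.length_eq_zero_iff] at hT hw
    subst hT; subst hw
    simp [allWords, wleB, down, ovl, cnt, chi_nil]
  | succ n ih =>
    intro T w hT hw
    match T, w with
    | t :: T', b :: w' =>
      have hT' : T'.length = n := by simpa using hT
      have hw' : w'.length = n := by simpa using hw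
      rw [sum_allWords_succ n (fun e => if wleB e (b :: w') then chi (t :: T') e else 0)]
      have e1 : (∑ e ∈ allWords n, (if wleB (false :: e) (b :: w') then chi (t :: T') (false :: e) else 0))
          = down T' w' := by
        rw [← ih T' w' hT' hw']
        apply Finset.sum_congr rfl
        intro e _
        have : wleB (false :: e) (b :: w') = wleB e w' := by simp [wleB]
        rw [this, chi_cons]
        simp
      have e2 : (∑ e ∈ allWords n, (if wleB (true :: e) (b :: w') then chi (t :: T') (true :: e) else 0))
          = (if b then (if t then (-1:ℚ) else 1) * down T' w' else 0) := by
        cases b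
        · simp [wleB]
        · rw [← ih T' w' hT' hw', if_pos rfl, Finset.mul_sum]
          apply Finset.sum_congr rfl
          intro e _
          have : wleB (true :: e) (true :: w') = wleB e w' := by simp [wleB]
          rw [this, chi_cons]
          cases h : wleB e w' <;> simp [h] <;> ring
      rw [e1, e2]
      have hovl : ovl (t :: T') (b :: w') = ((t && b) || ovl T' w') := by
        simp [ovl]
      have hcnt : cnt (b :: w') = (if b then 1 else 0) + cnt w' := by
        cases b <;> simp [cnt, List.count_cons] <;> omega
      cases b <;> cases t <;> cases hov : ovl T' w' <;>
        simp [down, hovl, hcnt, hov, pow_add] <;> ring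


lemma glast_app (l₁ l₂ : List Bool) (h : l₂ ≠ []) :
    (l₁ ++ l₂).getLast? = l₂.getLast? := by
  rw [List.getLast?_append]
  match hx : l₂.getLast? with
  | some x => rfl
  | none =>
    rw [List.getLast?_eq_none_iff] at hx
    exact absurd hx h

lemma cnt_cons (b : Bool) (l : List Bool) : cnt (b :: l) = cnt l + (if b then 1 else 0) := by
  cases b <;> simp [cnt, List.count_cons]

lemma cnt_append (l₁ l₂ : List Bool) : cnt (l₁ ++ l₂) = cnt l₁ + cnt l₂ := by
  simp [cnt, List.count_append]

lemma cnt_ones (j : ℕ) : cnt (ones j) = j := by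
  simp [cnt, ones]

lemma cnt_zeros (j : ℕ) : cnt (zeros j) = 0 := by
  simp [cnt, zeros, List.count_replicate]

lemma cnt_le_length (l : List Bool) : cnt l ≤ l.length := List.count_le_length

lemma cnt_lt_of_ne_ones : ∀ (M : List Bool), M ≠ ones M.length → cnt M < M.length
  | [] => by simp [ones]
  | b :: M => by
    intro h
    cases b
    · have := cnt_le_length M
      simp [cnt_cons]
      omega
    · have hM : M ≠ ones M.length := by
        intro hh
        apply h
        rw [show (true :: M).length = M.length + 1 from rfl, ones, List.replicate_succ, ← ones, ← hh]
      have := cnt_lt_of_ne_ones M hM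
      simp [cnt_cons]
      omega

lemma wle_nil_right : ∀ S : List Bool, wleB S [] = true → S = [] := by
  intro S
  cases S <;> simp [wleB]

lemma wle_refl : ∀ w : List Bool, wleB w w = true
  | [] => rfl
  | b :: w => by cases b <;> simp [wleB, wle_refl w]

lemma wle_cnt : ∀ e w : List Bool, wleB e w = true →
    cnt e ≤ cnt w ∧ (e ≠ w → cnt e < cnt w)
  | [], [], _ => ⟨le_refl _, by simp⟩
  | [], b :: w, h => by simp [wleB] at h
  | a :: e, [], h => by simp [wleB] at h
  | a :: e, b :: w, h => by
    have h1 : (!a || b) = true ∧ wleB e w = true := by simpa [wleB] using h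
    obtain ⟨hab, hw⟩ := h1
    obtain ⟨hle, hlt⟩ := wle_cnt e w hw
    by_cases hew : e = w
    · subst hew
      cases a <;> cases b <;> simp_all [cnt_cons]
    · have := hlt hew
      cases a <;> cases b <;> simp_all [cnt_cons] <;> omega

lemma ovl_cons (t b : Bool) (T w : List Bool) :
    ovl (t :: T) (b :: w) = ((t && b) || ovl T w) := by simp [ovl]

lemma ovl_append (T₁ T₂ w₁ w₂ : List Bool) (h : T₁.length = w₁.length) :
    ovl (T₁ ++ T₂) (w₁ ++ w₂) = (ovl T₁ w₁ || ovl T₂ w₂) := by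
  simp [ovl, List.zip_append h]

lemma ovl_zeros : ∀ (M : List Bool) (j : ℕ), ovl M (zeros j) = false
  | [], _ => rfl
  | b :: M, 0 => rfl
  | b :: M, j+1 => by
    rw [show zeros (j+1) = false :: zeros j from by simp [zeros, List.replicate_succ],
      ovl_cons, ovl_zeros M j]
    simp

lemma ovl_comp : ∀ P A : List Bool, P.length = A.length →
    ovl P (comp A) = !(wleB P A)
  | [], [], _ => rfl
  | p :: P, a :: A, h => by
    rw [show comp (a :: A) = (!a) :: comp A from rfl, ovl_cons,
      ovl_comp P A (by simpa using h)]
    cases p <;> cases a <;> simp [wleB]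

lemma last_of_wle : ∀ P A : List Bool, wleB P A = true →
    A.getLast? = some false → P.getLast? = some false
  | [], [], _, h2 => by simp at h2
  | [], b :: w, h, _ => by simp [wleB] at h
  | a :: e, [], h, _ => by simp [wleB] at h
  | [p], [a], h, h2 => by
    have : a = false := by simpa using h2
    subst this
    have : p = false := by
      cases p
      · rfl
      · simp [wleB] at h
    simp [this]
  | [p], a :: b :: A, h, h2 => by simp [wleB] at h
  | p :: q :: P, [a], h, h2 => by simp [wleB] at h
  | p :: q :: P, a :: b :: A, h, h2 => by
    have h1 : wleB (q :: P) (b :: A) = true := by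
      simp [wleB] at h
      simpa [wleB] using h.2
    rw [List.getLast?_cons_cons] at h2 ⊢
    exact last_of_wle (q :: P) (b :: A) h1 h2

lemma head_of_wle : ∀ S R : List Bool, wleB S R = true →
    R.head? = some false → S.head? = some false
  | [], [], _, h2 => by simp at h2
  | [], b :: w, h, _ => by simp [wleB] at h
  | a :: e, [], h, _ => by simp [wleB] at h
  | s :: S, r :: R, h, h2 => by
    have : r = false := by simpa using h2
    subst this
    have : s = false := by
      cases s
      · rfl
      · simp [wleB] at h
    simp [this]

lemma last_of_ovl : ∀ P E : List Bool, P.length = E.length → ovl P E = false →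
    E.getLast? = some true → P.getLast? = some false
  | [], [], _, _, h2 => by simp at h2
  | [p], [e], _, h, h2 => by
    have : e = true := by simpa using h2
    subst this
    have : p = false := by simpa [ovl] using h
    simp [this]
  | p :: q :: P, e :: f :: E, hl, h, h2 => by
    rw [ovl_cons] at h
    have h1 : ovl (q :: P) (f :: E) = false := by
      cases hov : ovl (q :: P) (f :: E) <;> simp_all
    rw [List.getLast?_cons_cons] at h2 ⊢
    exact last_of_ovl (q :: P) (f :: E) (by simpa using hl) h1 h2

lemma head_of_ovl : ∀ S F : List Bool, S.length = F.length → ovl S F = false →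
    F.head? = some true → S.head? = some false
  | [], [], _, _, h2 => by simp at h2
  | [], f :: F, hl, _, h2 => by simp at hl
  | s :: S, [], hl, _, h2 => by simp at h2
  | s :: S, f :: F, _, h, h2 => by
    have : f = true := by simpa using h2
    subst this
    rw [ovl_cons] at h
    have : s = false := by cases s <;> simp_all
    simp [this]

lemma down_append (T₁ T₂ w₁ w₂ : List Bool) (h : T₁.length = w₁.length) :
    down (T₁ ++ T₂) (w₁ ++ w₂) = down T₁ w₁ * down T₂ w₂ := by
  rw [down, down, down, ovl_append _ _ _ _ h, cnt_append]
  cases h1 : ovl T₁ w₁ <;> cases h2 : ovl T₂ w₂ <;> simp [pow_add]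

lemma down_zeros (M : List Bool) (j : ℕ) : down M (zeros j) = 1 := by
  simp [down, ovl_zeros, cnt_zeros]

lemma down_cons_false (b : Bool) (M X : List Bool) :
    down (b :: M) (false :: X) = down M X := by
  simp [down, ovl_cons, cnt_cons]

lemma Eij_length (i j : ℕ) (h1 : 1 ≤ i) (h2 : i ≤ j) : (Eij i j).length = j := by
  simp [Eij]
  omega

lemma Eij_one (j : ℕ) : Eij 1 (j+1) = true :: zeros j := by
  simp [Eij, zeros]

lemma Eij_succ (i j : ℕ) (h : 1 ≤ i) : Eij (i+1) (j+1) = false :: Eij i j := by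
  obtain ⟨i', rfl⟩ : ∃ i', i = i' + 1 := ⟨i - 1, by omega⟩
  show Eij (i'+2) (j+1) = false :: Eij (i'+1) j
  simp [Eij, List.replicate_succ, Nat.succ_sub_succ]

lemma alt_ones : ∀ j : ℕ, altQ (ones j) = if Odd j then 1 else 0
  | 0 => by simp [ones, altQ]
  | j+1 => by
    rw [show ones (j+1) = true :: ones j from by simp [ones, List.replicate_succ],
      show altQ (true :: ones j) = 1 - altQ (ones j) from by simp [altQ], alt_ones j]
    by_cases h : Odd j <;> simp [h, Nat.odd_add_one]

lemma inner_sum : ∀ M : List Bool,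
    (∑ i ∈ Finset.range M.length, (-1:ℚ)^i * down M (Eij (i+1) M.length))
      = 2 * (if Odd M.length then 1 else 0) - 2 * altQ M
  | [] => by simp [altQ]
  | b :: M' => by
    have ih := inner_sum M'
    rw [show (b :: M').length = M'.length + 1 from rfl, Finset.sum_range_succ']
    have e0 : (-1:ℚ)^0 * down (b :: M') (Eij (0+1) (M'.length+1))
        = if b then 0 else 2 := by
      rw [show (0:ℕ)+1 = 1 from rfl, Eij_one]
      cases b <;> simp [down, ovl_cons, ovl_zeros, cnt_cons, cnt_zeros]
    have e1 : ∀ i ∈ Finset.range M'.length,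
        (-1:ℚ)^(i+1) * down (b :: M') (Eij (i+1+1) (M'.length+1))
          = -((-1:ℚ)^i * down M' (Eij (i+1) M'.length)) := by
      intro i _
      rw [Eij_succ (i+1) M'.length (by omega), down_cons_false, pow_succ]
      ring
    rw [Finset.sum_congr rfl e1, Finset.sum_neg_distrib, ih, e0]
    rw [show altQ (b :: M') = (if b then 1 else 0) - altQ M' from rfl]
    by_cases h : Odd M'.length <;> cases b <;>
      simp [h, Nat.odd_add_one] <;> ring

lemma alt_split : ∀ M : List Bool, altQ M ≠ 0 →
    Odd (M.count true) ∨
      ∃ M₁ M₂, M = M₁ ++ M₂ ∧ M₁.getLast? = some false ∧ Odd (M₁.count true)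
  | [] => by simp [altQ]
  | false :: M' => fun h => by
    have h' : altQ M' ≠ 0 := by
      intro hh
      apply h
      simp [altQ, hh]
    rcases alt_split M' h' with h1 | ⟨M₁, M₂, rfl, hl, ho⟩
    · left
      simpa [List.count_cons] using h1
    · right
      refine ⟨false :: M₁, M₂, rfl, ?_, by simpa [List.count_cons] using ho⟩
      match M₁, hl with
      | q :: M₁', hl => rw [List.getLast?_cons_cons]; exact hl
  | [true] => fun _ => by
    left
    simp [Nat.odd_iff]
  | true :: false :: M₃ => fun _ => by
    right
    exact ⟨[true, false], M₃, rfl, rfl, by simp [Nat.odd_iff]⟩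
  | true :: true :: M₃ => fun h => by
    have h' : altQ M₃ ≠ 0 := by
      intro hh
      apply h
      simp [altQ, hh]
    rcases alt_split M₃ h' with h1 | ⟨M₁, M₂, rfl, hl, ho⟩
    · left
      rw [Nat.odd_iff] at h1 ⊢
      simp [List.count_cons]
      omega
    · right
      refine ⟨true :: true :: M₁, M₂, rfl, ?_, ?_⟩
      · match M₁, hl with
        | q :: M₁', hl => rw [List.getLast?_cons_cons, List.getLast?_cons_cons]; exact hl
      · rw [Nat.odd_iff] at ho ⊢
        simp [List.count_cons]
        omega

lemma core_bad (P M S : List Bool) (hP : P = [] ∨ P.getLast? = some false)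
    (hS : S = [] ∨ S.head? = some false) (hM : altQ M ≠ 0) :
    Bad (P ++ M ++ S) := by
  rcases Nat.even_or_odd (M.count true + S.count true) with hpar | hpar
  · rcases alt_split M hM with h1 | ⟨M₁, M₂, rfl, hl, ho⟩
    · -- Odd cnt M, so Odd cnt S, S ≠ []
      have hOS : Odd (S.count true) := by
        rw [Nat.odd_iff] at h1 ⊢
        rw [Nat.even_iff] at hpar
        omega
      have hSne : S ≠ [] := by
        intro hh
        rw [hh] at hOS
        simp [Nat.odd_iff] at hOS
      rcases hS with hS | hS
      · exact absurd hS hSne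
      · match S, hS with
        | false :: S', _ =>
          refine ⟨P ++ M ++ [false], S', by simp, Or.inr ?_, ?_⟩
          · rw [List.getLast?_concat]
          · simpa [List.count_cons] using hOS
    · refine ⟨P ++ M₁, M₂ ++ S, by simp, Or.inr ?_, ?_⟩
      · have hne : M₁ ≠ [] := by
          intro hh
          rw [hh] at hl
          simp at hl
        rw [glast_app _ _ hne]
        exact hl
      · rw [Nat.odd_iff] at ho ⊢
        rw [Nat.even_iff] at hpar
        simp [List.count_append] at hpar ⊢
        omega
  · exact ⟨P, M ++ S, by simp, hP, by simpa [List.count_append] using hpar⟩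

lemma run_split : ∀ Q : List Bool, ∃ t Q'',
    Q = ones t ++ Q'' ∧ (Q'' = [] ∨ Q''.head? = some false)
  | [] => ⟨0, [], by simp [ones], Or.inl rfl⟩
  | false :: X => ⟨0, false :: X, by simp [ones], Or.inr rfl⟩
  | true :: X => by
    obtain ⟨t, Q'', h1, h2⟩ := run_split X
    exact ⟨t + 1, Q'', by simp [ones, List.replicate_succ, h1], h2⟩

lemma odd_decomp : ∀ (N : ℕ) (Q : List Bool), Q.length ≤ N → Odd (Q.count true) →
    ∃ A j R, Q = A ++ ones j ++ R ∧ Odd j ∧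
      (A = [] ∨ A.getLast? = some false) ∧ (R = [] ∨ R.head? = some false) := by
  intro N
  induction N with
  | zero =>
    intro Q hQ h
    have : Q = [] := by
      cases Q
      · rfl
      · simp at hQ
    subst this
    simp [Nat.odd_iff] at h
  | succ N ih =>
    intro Q hQ h
    match Q with
    | [] => simp [Nat.odd_iff] at h
    | false :: Q' =>
      obtain ⟨A, j, R, h1, h2, h3, h4⟩ := ih Q' (by simp at hQ; omega)
        (by simpa [List.count_cons] using h)
      refine ⟨false :: A, j, R, by simp [h1], h2, Or.inr ?_, h4⟩
      rcases h3 with h3 | h3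
      · subst h3; rfl
      · match A, h3 with
        | q :: A', h3 => rw [List.getLast?_cons_cons]; exact h3
    | true :: Q' =>
      obtain ⟨t, Q'', hq, hq2⟩ := run_split Q'
      have hQdecomp : true :: Q' = ones (t+1) ++ Q'' := by
        simp [ones, List.replicate_succ, hq]
      have hcnt : Q''.count true + (t+1) = (true :: Q').count true := by
        rw [hQdecomp]
        simp [List.count_append, ones]
        omega
      rcases Nat.even_or_odd (t+1) with hpar | hpar
      · -- even run, recurse on Q''
        have hoQ'' : Odd (Q''.count true) := by
          rw [Nat.odd_iff] at h ⊢
          rw [Nat.even_iff] at hpar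
          omega
        have hlen : Q''.length ≤ N := by
          have : (true :: Q').length = (t+1) + Q''.length := by
            rw [hQdecomp]; simp [ones]
          omega
        obtain ⟨A', j, R, h1, h2, h3, h4⟩ := ih Q'' hlen hoQ''
        have hA'ne : A' ≠ [] := by
          intro hh
          subst hh
          simp at h1
          rcases hq2 with hq2 | hq2
          · subst hq2
            simp [Nat.odd_iff] at hoQ''
          · rw [h1] at hq2
            have hj1 : 1 ≤ j := h2.pos
            match j, hj1 with
            | j'+1, _ =>
              rw [show ones (j'+1) ++ R = true :: (ones j' ++ R) from by
                simp [ones, List.replicate_succ]] at hq2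
              simp at hq2
        refine ⟨ones (t+1) ++ A', j, R, ?_, h2, Or.inr ?_, h4⟩
        · rw [hQdecomp, h1]
          simp
        · rw [glast_app _ _ hA'ne]
          rcases h3 with h3 | h3
          · exact absurd h3 hA'ne
          · exact h3
      · exact ⟨[], t+1, Q'', by simpa using hQdecomp, hpar, Or.inl rfl, hq2⟩

lemma bad_decomp (T : List Bool) (h : Bad T) :
    ∃ A j R, T = A ++ ones j ++ R ∧ Odd j ∧
      (A = [] ∨ A.getLast? = some false) ∧ (R = [] ∨ R.head? = some false) := by
  obtain ⟨V, Q, rfl, hV, hQ⟩ := h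
  obtain ⟨A', j, R, h1, h2, h3, h4⟩ := odd_decomp Q.length Q (le_refl _) hQ
  rcases h3 with h3 | h3
  · subst h3
    simp at h1
    exact ⟨V, j, R, by rw [h1, ← List.append_assoc], h2, hV, h4⟩
  · refine ⟨V ++ A', j, R, by rw [h1]; simp, h2, Or.inr ?_, h4⟩
    have hne : A' ≠ [] := by
      intro hh
      rw [hh] at h3
      simp at h3
    rw [glast_app _ _ hne]
    exact h3


lemma glast_map : ∀ (l : List Bool) (f : Bool → Bool),
    (l.map f).getLast? = l.getLast?.map f
  | [], f => rfl
  | [b], f => rfl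
  | b :: c :: rest, f => by
    rw [List.map_cons, List.map_cons, List.getLast?_cons_cons, ← List.map_cons,
      glast_map (c :: rest) f, List.getLast?_cons_cons]

lemma chi_chk_one (P u : List Bool) (h : P.length = u.length)
    (hP : P = [] ∨ P.getLast? = some false) : chi P (chk u) = chi P u := by
  rw [chi_chk P u h]
  have : P.getLast? ≠ some true := by
    rcases hP with hP | hP
    · subst hP; simp
    · rw [hP]; simp
  rw [if_neg this, one_mul]

lemma dual_to_hz (n : ℕ) (β : List Bool → ℚ) (hd : DualBB n β) :
    ∀ T : List Bool, T.length = n → Bad T → hatF n β T = 0 := by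
  rintro T hT ⟨V, Q, rfl, hV, hQ⟩
  have hlen : V.length + Q.length = n := by simpa using hT
  have hsplit : hatF n β (V ++ Q)
      = ∑ u ∈ allWords V.length, ∑ v ∈ allWords Q.length,
          chi V u * chi Q v * β (u ++ v) := by
    unfold hatF
    rw [← hlen, sum_allWords_append]
    apply Finset.sum_congr rfl
    intro u hu
    apply Finset.sum_congr rfl
    intro v hv
    rw [chi_append V Q u v (mem_allWords.mp hu).symm]
  set X := ∑ u ∈ allWords V.length, ∑ v ∈ allWords Q.length,
      chi V u * chi Q v * β (u ++ v) with hX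
  have hreidx : X = ∑ u ∈ allWords V.length, ∑ v ∈ allWords Q.length,
      chi V u * chi Q v * β (chk u ++ v) := by
    rw [hX]
    rw [sum_invol V.length chk (fun w hw => by rw [chk_length, hw])
      (fun w _ => chk_chk w)
      (fun u => ∑ v ∈ allWords Q.length, chi V u * chi Q v * β (u ++ v))]
    apply Finset.sum_congr rfl
    intro u hu
    apply Finset.sum_congr rfl
    intro v _
    rw [chi_chk_one V u (mem_allWords.mp hu).symm hV]
  have hY1 : (∑ u ∈ allWords V.length, ∑ v ∈ allWords Q.length,
      chi V u * chi Q v * (β (u ++ v) + β (chk u ++ v))) = X + X := by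
    nth_rewrite 2 [hreidx]
    nth_rewrite 1 [hX]
    rw [← Finset.sum_add_distrib]
    apply Finset.sum_congr rfl
    intro u _
    rw [← Finset.sum_add_distrib]
    apply Finset.sum_congr rfl
    intro v _
    ring
  have hY12 : (∑ u ∈ allWords V.length, ∑ v ∈ allWords Q.length,
      chi V u * chi Q v * (β (u ++ v) + β (chk u ++ v)))
      = ∑ u ∈ allWords V.length, ∑ v ∈ allWords Q.length,
          chi V u * chi Q v * (β (u ++ comp v) + β (chk u ++ comp v)) := by
    apply Finset.sum_congr rfl
    intro u hu
    apply Finset.sum_congr rfl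
    intro v hv
    rw [hd u v (by rw [(mem_allWords.mp hu), (mem_allWords.mp hv)]; exact hlen)]
  have hY2 : (∑ u ∈ allWords V.length, ∑ v ∈ allWords Q.length,
      chi V u * chi Q v * (β (u ++ comp v) + β (chk u ++ comp v)))
      = -∑ u ∈ allWords V.length, ∑ v ∈ allWords Q.length,
          chi V u * chi Q v * (β (u ++ v) + β (chk u ++ v)) := by
    rw [← Finset.sum_neg_distrib]
    apply Finset.sum_congr rfl
    intro u hu
    rw [sum_invol Q.length comp (fun w hw => by rw [comp_length, hw])
      (fun w _ => comp_comp w)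
      (fun v => chi V u * chi Q v * (β (u ++ comp v) + β (chk u ++ comp v)))]
    rw [← Finset.sum_neg_distrib]
    apply Finset.sum_congr rfl
    intro v hv
    rw [chi_comp Q v (mem_allWords.mp hv).symm, comp_comp,
      Odd.neg_one_pow (by simpa [cnt] using hQ)]
    ring
  have : X = 0 := by linarith
  rw [hsplit]
  exact this

lemma hz_to_dual (n : ℕ) (β : List Bool → ℚ)
    (hz : ∀ T : List Bool, T.length = n → Bad T → hatF n β T = 0) :
    DualBB n β := by
  intro E F hlen
  have l1 : (E ++ F).length = n := by simpa using hlen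
  have l2 : (chk E ++ F).length = n := by simp [chk_length]; simpa using hlen
  have l3 : (E ++ comp F).length = n := by simp [comp_length]; simpa using hlen
  have l4 : (chk E ++ comp F).length = n := by simp [chk_length, comp_length]; simpa using hlen
  have h1 := inv_hat n β (E ++ F) l1
  have h2 := inv_hat n β (chk E ++ F) l2
  have h3 := inv_hat n β (E ++ comp F) l3
  have h4 := inv_hat n β (chk E ++ comp F) l4
  have hsum0 : (∑ T ∈ allWords n,
      (chi T (E ++ F) + chi T (chk E ++ F) - chi T (E ++ comp F) - chi T (chk E ++ comp F))
        * hatF n β T) = 0 := by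
    rw [← hlen, sum_allWords_append E.length F.length]
    apply Finset.sum_eq_zero
    intro P hP
    apply Finset.sum_eq_zero
    intro Q hQ
    have hPl : P.length = E.length := mem_allWords.mp hP
    have hQl : Q.length = F.length := mem_allWords.mp hQ
    rw [chi_append P Q E F hPl, chi_append P Q (chk E) F (by rw [hPl, chk_length]),
      chi_append P Q E (comp F) hPl, chi_append P Q (chk E) (comp F) (by rw [hPl, chk_length])]
    rw [chi_chk P E (hPl.trans rfl), chi_comp Q F hQl]
    rcases Nat.even_or_odd (cnt Q) with hpar | hpar
    · rw [Even.neg_one_pow hpar]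
      ring
    · rw [Odd.neg_one_pow hpar]
      by_cases hlast : P.getLast? = some true
      · rw [if_pos hlast]
        ring
      · have hbad : Bad (P ++ Q) := by
          refine ⟨P, Q, rfl, ?_, by simpa [cnt] using hpar⟩
          match h : P.getLast? with
          | none => exact Or.inl (by simpa using h)
          | some true => exact absurd h hlast
          | some false => exact Or.inr rfl
        rw [show E.length + F.length = n from hlen,
          hz (P ++ Q) (by rw [List.length_append, hPl, hQl]; exact hlen) hbad]
        ring
  have comb : (∑ T ∈ allWords n, chi T (E ++ F) * hatF n β T)
      + (∑ T ∈ allWords n, chi T (chk E ++ F) * hatF n β T)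
      - (∑ T ∈ allWords n, chi T (E ++ comp F) * hatF n β T)
      - (∑ T ∈ allWords n, chi T (chk E ++ comp F) * hatF n β T)
      = ∑ T ∈ allWords n,
        (chi T (E ++ F) + chi T (chk E ++ F) - chi T (E ++ comp F) - chi T (chk E ++ comp F))
          * hatF n β T := by
    rw [← Finset.sum_add_distrib, ← Finset.sum_sub_distrib, ← Finset.sum_sub_distrib]
    apply Finset.sum_congr rfl
    intro T _
    ring
  rw [h1, h2, h3, h4]
  linear_combination ((2:ℚ)^n)⁻¹ * comb + ((2:ℚ)^n)⁻¹ * hsum0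


lemma alpha_hat (n : ℕ) (α β : List Bool → ℚ)
    (hab : ∀ F : List Bool, F.length = n →
      α F = ∑ E ∈ (allWords n).filter (fun E => wleB E F), β E)
    (w : List Bool) (hw : w.length = n) :
    α w = (2^n : ℚ)⁻¹ * ∑ T ∈ allWords n, down T w * hatF n β T := by
  rw [hab w hw, Finset.sum_filter]
  have step : ∀ e ∈ allWords n, (if (wleB e w) then β e else 0)
      = ∑ T ∈ allWords n, (2^n : ℚ)⁻¹ * ((if wleB e w then chi T e else 0) * hatF n β T) := by
    intro e he
    cases h : wleB e w
    · simp [h]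
    · simp only [h, if_true]
      rw [← Finset.mul_sum, ← inv_hat n β e (mem_allWords.mp he)]
  rw [Finset.sum_congr rfl step, Finset.sum_comm, Finset.mul_sum]
  apply Finset.sum_congr rfl
  intro T hT
  rw [← Finset.mul_sum, ← Finset.sum_mul,
    downSum n T w (mem_allWords.mp hT) hw]

lemma V_expand (n j : ℕ) (E F : List Bool) (α β : List Bool → ℚ)
    (hab : ∀ G : List Bool, G.length = n →
      α G = ∑ e ∈ (allWords n).filter (fun e => wleB e G), β e)
    (hlen : E.length + j + F.length = n) :
    (∑ i ∈ Finset.range j, (-1:ℚ)^i * α (E ++ Eij (i+1) j ++ F))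
      - 2 * (if Odd j then 1 else 0) * α (E ++ zeros j ++ F)
    = (2^n : ℚ)⁻¹ * ∑ P ∈ allWords E.length, ∑ M ∈ allWords j, ∑ S ∈ allWords F.length,
        (-2) * altQ M * (down P E * down S F * hatF n β (P ++ M ++ S)) := by
  have hEw : ∀ i ∈ Finset.range j, (E ++ Eij (i+1) j ++ F).length = n := by
    intro i hi
    have := Finset.mem_range.mp hi
    rw [List.length_append, List.length_append, Eij_length (i+1) j (by omega) (by omega)]
    exact hlen
  have h0 : (E ++ zeros j ++ F).length = n := by
    rw [List.length_append, List.length_append]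
    simpa [zeros] using hlen
  have e1 : ∀ i ∈ Finset.range j, (-1:ℚ)^i * α (E ++ Eij (i+1) j ++ F)
      = ∑ T ∈ allWords n, (2^n : ℚ)⁻¹ *
          (((-1:ℚ)^i * down T (E ++ Eij (i+1) j ++ F)) * hatF n β T) := by
    intro i hi
    rw [alpha_hat n α β hab _ (hEw i hi), Finset.mul_sum, Finset.mul_sum]
    apply Finset.sum_congr rfl
    intro T _
    ring
  have hA : (∑ i ∈ Finset.range j, (-1:ℚ)^i * α (E ++ Eij (i+1) j ++ F))
      = ∑ T ∈ allWords n, (2^n : ℚ)⁻¹ *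
          ((∑ i ∈ Finset.range j, (-1:ℚ)^i * down T (E ++ Eij (i+1) j ++ F)) * hatF n β T) := by
    rw [Finset.sum_congr rfl e1, Finset.sum_comm]
    apply Finset.sum_congr rfl
    intro T _
    rw [Finset.sum_mul, Finset.mul_sum]
  have hB : 2 * (if Odd j then (1:ℚ) else 0) * α (E ++ zeros j ++ F)
      = ∑ T ∈ allWords n, (2^n : ℚ)⁻¹ *
          ((2 * (if Odd j then (1:ℚ) else 0) * down T (E ++ zeros j ++ F)) * hatF n β T) := by
    rw [alpha_hat n α β hab _ h0, Finset.mul_sum, Finset.mul_sum]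
    apply Finset.sum_congr rfl
    intro T _
    ring
  have step1 : (∑ i ∈ Finset.range j, (-1:ℚ)^i * α (E ++ Eij (i+1) j ++ F))
      - 2 * (if Odd j then 1 else 0) * α (E ++ zeros j ++ F)
      = (2^n : ℚ)⁻¹ * ∑ T ∈ allWords n,
          ((∑ i ∈ Finset.range j, (-1:ℚ)^i * down T (E ++ Eij (i+1) j ++ F))
            - 2 * (if Odd j then 1 else 0) * down T (E ++ zeros j ++ F)) * hatF n β T := by
    rw [hA, hB, ← Finset.sum_sub_distrib, Finset.mul_sum]
    apply Finset.sum_congr rfl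
    intro T _
    ring
  rw [step1]
  congr 1
  rw [← hlen, sum_allWords_append (E.length + j) F.length, sum_allWords_append E.length j]
  apply Finset.sum_congr rfl
  intro P hP
  apply Finset.sum_congr rfl
  intro M hM
  apply Finset.sum_congr rfl
  intro S hS
  have hPl : P.length = E.length := mem_allWords.mp hP
  have hMl : M.length = j := mem_allWords.mp hM
  have hSl : S.length = F.length := mem_allWords.mp hS
  have d1 : ∀ i ∈ Finset.range j,
      down (P ++ M ++ S) (E ++ Eij (i+1) j ++ F)
        = down P E * down M (Eij (i+1) j) * down S F := by
    intro i hi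
    have hrg := Finset.mem_range.mp hi
    rw [down_append (P ++ M) S (E ++ Eij (i+1) j) F
        (by rw [List.length_append, List.length_append, hPl, hMl,
          Eij_length (i+1) j (by omega) (by omega)]),
      down_append P M E (Eij (i+1) j) hPl]
  have d0 : down (P ++ M ++ S) (E ++ zeros j ++ F)
      = down P E * down S F := by
    rw [down_append (P ++ M) S (E ++ zeros j) F
        (by rw [List.length_append, List.length_append, hPl, hMl]; simp [zeros]),
      down_append P M E (zeros j) hPl, down_zeros]
    ring
  have pull : (∑ i ∈ Finset.range j, (-1:ℚ)^i * down (P ++ M ++ S) (E ++ Eij (i+1) j ++ F))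
      = down P E * down S F * (∑ i ∈ Finset.range j, (-1:ℚ)^i * down M (Eij (i+1) j)) := by
    rw [Finset.mul_sum]
    apply Finset.sum_congr rfl
    intro i hi
    rw [d1 i hi]
    ring
  have hinner : (∑ i ∈ Finset.range j, (-1:ℚ)^i * down M (Eij (i+1) j))
      = 2 * (if Odd j then 1 else 0) - 2 * altQ M := by
    have := inner_sum M
    rw [hMl] at this
    exact this
  rw [pull, hinner, d0]
  ring


lemma icc_range (j : ℕ) (g : ℕ → ℚ) :
    (∑ i ∈ Finset.Icc 1 j, (-1:ℚ)^(i-1) * g i)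
      = ∑ i ∈ Finset.range j, (-1:ℚ)^i * g (i+1) := by
  rw [← Finset.Ico_add_one_right_eq_Icc, Finset.sum_Ico_eq_sum_range]
  apply Finset.sum_congr (by rw [Nat.add_sub_cancel])
  intro i _
  rw [show 1 + i - 1 = i from by omega, show 1 + i = i + 1 from by omega]

lemma hz_to_bb (n : ℕ) (α β : List Bool → ℚ)
    (hab : ∀ G : List Bool, G.length = n →
      α G = ∑ e ∈ (allWords n).filter (fun e => wleB e G), β e)
    (hz : ∀ T : List Bool, T.length = n → Bad T → hatF n β T = 0) :
    BB n α := by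
  intro j E F hj hE hF hlen
  have hv := V_expand n j E F α β hab hlen
  have hzero : (∑ P ∈ allWords E.length, ∑ M ∈ allWords j, ∑ S ∈ allWords F.length,
      (-2) * altQ M * (down P E * down S F * hatF n β (P ++ M ++ S))) = 0 := by
    apply Finset.sum_eq_zero; intro P hP
    apply Finset.sum_eq_zero; intro M hM
    apply Finset.sum_eq_zero; intro S hS
    have hPl := mem_allWords.mp hP
    have hMl := mem_allWords.mp hM
    have hSl := mem_allWords.mp hS
    by_cases haM : altQ M = 0
    · rw [haM]; ring
    by_cases hoP : ovl P E = true
    · rw [show down P E = 0 from by simp [down, hoP]]; ring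
    by_cases hoS : ovl S F = true
    · rw [show down S F = 0 from by simp [down, hoS]]; ring
    have hPc : P = [] ∨ P.getLast? = some false := by
      rcases hE with hE' | hE'
      · left; rw [← List.length_eq_zero_iff, hPl, hE']; rfl
      · right; exact last_of_ovl P E hPl (by simpa using hoP) hE'
    have hSc : S = [] ∨ S.head? = some false := by
      rcases hF with hF' | hF'
      · left; rw [← List.length_eq_zero_iff, hSl, hF']; rfl
      · right; exact head_of_ovl S F hSl (by simpa using hoS) hF'
    have hbad := core_bad P M S hPc hSc haM
    rw [hz (P ++ M ++ S)
      (by rw [List.length_append, List.length_append, hPl, hMl, hSl]; exact hlen) hbad]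
    ring
  rw [icc_range j (fun i => α (E ++ Eij i j ++ F))]
  rw [hzero, mul_zero] at hv
  linarith

lemma bb_to_hz (n : ℕ) (α β : List Bool → ℚ)
    (hab : ∀ G : List Bool, G.length = n →
      α G = ∑ e ∈ (allWords n).filter (fun e => wleB e G), β e)
    (hbb : BB n α) :
    ∀ T : List Bool, T.length = n → Bad T → hatF n β T = 0 := by
  suffices H : ∀ c (T : List Bool), cnt T = c → T.length = n → Bad T → hatF n β T = 0 by
    intro T hT hbad
    exact H (cnt T) T rfl hT hbad
  intro c
  induction c using Nat.strong_induction_on with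
  | _ c ih =>
  intro T hcnt hT hbad
  obtain ⟨A, j, R, rfl, hOj, hA, hR⟩ := bad_decomp T hbad
  have hj : 1 ≤ j := hOj.pos
  have hAl : (comp A).length = A.length := comp_length A
  have hRl : (comp R).length = R.length := comp_length R
  have hTlen : A.length + j + R.length = n := by
    rw [← hT, List.length_append, List.length_append]
    simp [ones]
  have hlen : (comp A).length + j + (comp R).length = n := by
    rw [hAl, hRl]; exact hTlen
  have hE : comp A = [] ∨ (comp A).getLast? = some true := by
    rcases hA with hA' | hA'
    · left; rw [hA']; rfl
    · right; rw [comp, glast_map, hA']; rfl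
  have hF : comp R = [] ∨ (comp R).head? = some true := by
    rcases hR with hR' | hR'
    · left; rw [hR']; rfl
    · right; rw [comp, List.head?_map, hR']; rfl
  have hbbeq := hbb j (comp A) (comp R) hj hE hF hlen
  rw [icc_range j (fun i => α (comp A ++ Eij i j ++ comp R))] at hbbeq
  have hv := V_expand n j (comp A) (comp R) α β hab hlen
  have hS0 : (∑ P ∈ allWords (comp A).length, ∑ M ∈ allWords j, ∑ S ∈ allWords (comp R).length,
      (-2) * altQ M * (down P (comp A) * down S (comp R) * hatF n β (P ++ M ++ S))) = 0 := by
    have h2n : ((2:ℚ)^n)⁻¹ ≠ 0 := by positivity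
    have h0 : ((2:ℚ)^n)⁻¹ * (∑ P ∈ allWords (comp A).length, ∑ M ∈ allWords j,
        ∑ S ∈ allWords (comp R).length,
        (-2) * altQ M * (down P (comp A) * down S (comp R) * hatF n β (P ++ M ++ S))) = 0 := by
      rw [← hv]
      linarith
    rcases mul_eq_zero.mp h0 with h | h
    · exact absurd h h2n
    · exact h
  have hterm : ∀ P ∈ allWords (comp A).length, ∀ M ∈ allWords j, ∀ S ∈ allWords (comp R).length,
      (P ≠ A ∨ M ≠ ones j ∨ S ≠ R) →
      (-2) * altQ M * (down P (comp A) * down S (comp R) * hatF n β (P ++ M ++ S)) = 0 := by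
    intro P hP M hM S hS hne
    have hPl := mem_allWords.mp hP
    have hMl := mem_allWords.mp hM
    have hSl := mem_allWords.mp hS
    by_cases haM : altQ M = 0
    · rw [haM]; ring
    by_cases hwP : wleB P A = true
    case neg =>
      have : ovl P (comp A) = true := by
        rw [ovl_comp P A (by rw [hPl, hAl])]
        simp [hwP]
      rw [show down P (comp A) = 0 from by simp [down, this]]
      ring
    by_cases hwS : wleB S R = true
    case neg =>
      have : ovl S (comp R) = true := by
        rw [ovl_comp S R (by rw [hSl, hRl])]
        simp [hwS]
      rw [show down S (comp R) = 0 from by simp [down, this]]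
      ring
    have hcP := wle_cnt P A hwP
    have hcS := wle_cnt S R hwS
    have hcM : cnt M ≤ j := by rw [← hMl]; exact cnt_le_length M
    have hstrict : cnt P + cnt M + cnt S < cnt A + j + cnt R := by
      rcases hne with h1 | h2 | h3
      · have := hcP.2 h1
        have := hcS.1
        omega
      · have : cnt M < j := by
          have := cnt_lt_of_ne_ones M (by rw [hMl]; exact h2)
          omega
        have := hcP.1
        have := hcS.1
        omega
      · have := hcS.2 h3
        have := hcP.1
        omega
    have hPc : P = [] ∨ P.getLast? = some false := by
      rcases hA with hA' | hA'
      · left; rw [← List.length_eq_zero_iff, hPl, hAl, hA']; rfl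
      · right; exact last_of_wle P A hwP hA'
    have hSc : S = [] ∨ S.head? = some false := by
      rcases hR with hR' | hR'
      · left; rw [← List.length_eq_zero_iff, hSl, hRl, hR']; rfl
      · right; exact head_of_wle S R hwS hR'
    have hbad' := core_bad P M S hPc hSc haM
    have hcntT : cnt (A ++ ones j ++ R) = cnt A + j + cnt R := by
      rw [cnt_append, cnt_append, cnt_ones]
    have hlt : cnt (P ++ M ++ S) < c := by
      rw [cnt_append, cnt_append, ← hcnt, hcntT]
      exact hstrict
    rw [ih (cnt (P ++ M ++ S)) hlt (P ++ M ++ S) rfl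
      (by rw [List.length_append, List.length_append, hPl, hMl, hSl, hAl, hRl]; exact hTlen)
      hbad']
    ring
  have hAL : A ∈ allWords (comp A).length := mem_allWords.mpr hAl.symm
  have hML : ones j ∈ allWords j := mem_allWords.mpr (by simp [ones])
  have hRL : R ∈ allWords (comp R).length := mem_allWords.mpr hRl.symm
  rw [Finset.sum_eq_single_of_mem A hAL
    (fun P hP hne => Finset.sum_eq_zero fun M hM => Finset.sum_eq_zero fun S hS =>
      hterm P hP M hM S hS (Or.inl hne))] at hS0
  rw [Finset.sum_eq_single_of_mem (ones j) hML
    (fun M hM hne => Finset.sum_eq_zero fun S hS =>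
      hterm A hAL M hM S hS (Or.inr (Or.inl hne)))] at hS0
  rw [Finset.sum_eq_single_of_mem R hRL
    (fun S hS hne => hterm A hAL (ones j) hML S hS (Or.inr (Or.inr hne)))] at hS0
  have ha1 : altQ (ones j) = 1 := by rw [alt_ones, if_pos hOj]
  have hd1 : down A (comp A) = 2 ^ (cnt (comp A)) := by
    rw [down, ovl_comp A A rfl, wle_refl A]
    rfl
  have hd2 : down R (comp R) = 2 ^ (cnt (comp R)) := by
    rw [down, ovl_comp R R rfl, wle_refl R]
    rfl
  rw [ha1, hd1, hd2] at hS0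
  have h1 : ((2:ℚ) ^ cnt (comp A)) ≠ 0 := by positivity
  have h2 : ((2:ℚ) ^ cnt (comp R)) ≠ 0 := by positivity
  rcases mul_eq_zero.mp hS0 with h | h
  · norm_num at h
  · rcases mul_eq_zero.mp h with h' | h'
    · rcases mul_eq_zero.mp h' with h'' | h''
      · exact absurd h'' h1
      · exact absurd h'' h2
    · exact h'

end BBaux

theorem bayer_billera_iff_dual_bayer_billera (n : ℕ) (hn : 1 ≤ n)
    (α β : List Bool → ℚ)
    (hαβ : ∀ F : List Bool, F.length = n →
      α F = ∑ E ∈ (allWords n).filter (fun E => wleB E F), β E) :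
    BB n α ↔ DualBB n β := by
  constructor
  · intro hbb
    exact BBaux.hz_to_dual n β (BBaux.bb_to_hz n α β hαβ hbb)
  · intro hd
    exact BBaux.hz_to_bb n α β hαβ (BBaux.dual_to_hz n β hd)
end

section
/- Let n ≥ 1 and let β be a function assigning a rational number to every 0-1 word of length n that satisfies the dual Bayer–Billera relations. Then for all 0-1 words E, F and all j ≥ 1 such that E1^jF has length n, β_{E1^jF} = Σ_{i=1}^{j−1} (−1)^{i−1} β_{E E_{i,j} F̄} + (−1)^{j−1} β_{E E_{j,j} F} + χ_even(j) β_{E 0^j F̄}, where 1^j (resp. 0^j) is the word of j ones (resp. zeros), and χ_even(j) = 1 if j is even and 0 otherwise. -/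
lemma chk_append (E : List Bool) (b : Bool) : chk (E ++ [b]) = E ++ [!b] := by
  induction E with
  | nil => rfl
  | cons a E ih =>
    cases E with
    | nil => rfl
    | cons c E' =>
      show a :: chk ((c :: E') ++ [b]) = _
      rw [ih]; rfl

lemma Eij_shift (i j : ℕ) (hi : 1 ≤ i) : Eij (i+1) (j+1) = false :: Eij i j := by
  obtain ⟨i, rfl⟩ : ∃ k, i = k + 1 := ⟨i - 1, by omega⟩
  simp [Eij, List.replicate_succ, Nat.succ_sub_succ]

lemma Eij_one (j : ℕ) : Eij 1 (j+1) = true :: zeros j := by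
  simp [Eij, zeros]

lemma comp_append (A B : List Bool) : comp (A ++ B) = comp A ++ comp B := by
  simp [comp]

lemma comp_ones (j : ℕ) : comp (ones j) = zeros j := by
  simp [comp, ones, zeros]

theorem dualBB_solving_ones (n : ℕ) (hn : 1 ≤ n) (β : List Bool → ℚ)
    (hβ : DualBB n β) (E F : List Bool) (j : ℕ) (hj : 1 ≤ j)
    (hlen : E.length + j + F.length = n) :
    β (E ++ ones j ++ F) =
      (∑ i ∈ Finset.Icc 1 (j - 1), (-1 : ℚ) ^ (i - 1) * β (E ++ Eij i j ++ comp F)) +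
        (-1 : ℚ) ^ (j - 1) * β (E ++ Eij j j ++ F) +
        (if Even j then 1 else 0) * β (E ++ zeros j ++ comp F) := by
  induction j, hj using Nat.le_induction generalizing E with
  | base =>
    simp [ones, Eij, show ¬ Even 1 by decide]
  | succ j hj ih =>
    obtain ⟨m, rfl⟩ : ∃ k, j = k + 1 := ⟨j - 1, by omega⟩
    -- the dual BB relation at the split after E ++ [true]
    have h1 := hβ (E ++ [true]) (ones (m+1) ++ F)
      (by simp [ones]; omega)
    rw [chk_append, comp_append, comp_ones] at h1
    simp only [Bool.not_true] at h1
    -- the induction hypothesis applied to E ++ [false]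
    have h2 := ih (E ++ [false]) (by simp; omega)
    -- rewrite IH's sum into shifted form
    rw [← Finset.Ico_add_one_right_eq_Icc, Finset.sum_Ico_eq_sum_range] at h2
    rw [← Finset.Ico_add_one_right_eq_Icc, Finset.sum_Ico_eq_sum_range]
    simp only [Nat.add_sub_cancel, Nat.succ_sub_one] at h2 ⊢
    have hsum : ∀ k, (E ++ [false]) ++ Eij (1 + k) (m+1) ++ comp F
        = E ++ Eij (1 + k + 1) (m + 1 + 1) ++ comp F := by
      intro k
      rw [Eij_shift (1+k) (m+1) (by omega)]
      simp
    simp only [hsum] at h2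
    have h5 : (E ++ [false]) ++ Eij (m+1) (m+1) ++ F = E ++ Eij (m+1+1) (m+1+1) ++ F := by
      rw [Eij_shift (m+1) (m+1) (by omega)]; simp
    have h4 : (E ++ [false]) ++ zeros (m+1) ++ comp F = E ++ zeros (m+1+1) ++ comp F := by
      simp [zeros, List.replicate_succ]
    rw [h5, h4] at h2
    -- rewrite h1's words
    have e1 : (E ++ [true]) ++ (ones (m+1) ++ F) = E ++ ones (m+1+1) ++ F := by
      simp [ones, List.replicate_succ]
    have e2 : (E ++ [false]) ++ (ones (m+1) ++ F) = (E ++ [false]) ++ ones (m+1) ++ F := by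
      simp
    have e3 : (E ++ [true]) ++ (zeros (m+1) ++ comp F) = E ++ Eij 1 (m+1+1) ++ comp F := by
      rw [Eij_one]; simp [zeros]
    have e4 : (E ++ [false]) ++ (zeros (m+1) ++ comp F) = E ++ zeros (m+1+1) ++ comp F := by
      simp [zeros, List.replicate_succ]
    rw [e1, e2, e3, e4] at h1
    -- split target sum: first term + rest
    rw [Finset.sum_range_succ']
    have hshift : ∀ k ∈ Finset.range m,
        (-1 : ℚ) ^ (1 + (k+1) - 1) * β (E ++ Eij (1 + (k+1)) (m+1+1) ++ comp F)
        = -((-1 : ℚ) ^ (1 + k - 1) * β (E ++ Eij (1 + k + 1) (m+1+1) ++ comp F)) := by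
      intro k _
      have h1' : (1 + (k+1) : ℕ) = 1 + k + 1 := by ring
      have h2' : (1 + k + 1 - 1 : ℕ) = (1 + k - 1) + 1 := by omega
      rw [h1', h2', pow_succ]
      ring
    rw [Finset.sum_congr rfl hshift, Finset.sum_neg_distrib]
    simp only [show (1 + 0 - 1 : ℕ) = 0 from rfl, pow_zero, one_mul]
    rcases Nat.even_or_odd m with hm | hm <;>
      simp [Nat.even_add_one, hm, Nat.not_even_iff_odd, parity_simps] at h1 h2 ⊢ <;>
      linarith
end

section
/- Let n ≥ 1 and let β be a function assigning a rational number to every 0-1 word of length n that satisfies the dual Bayer–Billera relations. Then for all 0-1 words E and F such that EF has length n and F is either empty or begins with the letter 1, one has Σ_{F' ≤ F} β_{EF'} = Σ_{F' ≤ F} β_{E \overline{F'}}, where both sums range over all 0-1 words F' of the same length as F with F' ≤ F. -/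
lemma wleB_length : ∀ A B : List Bool, wleB A B = true → A.length = B.length
  | [], [], _ => rfl
  | a :: A, b :: B, h => by
    simp only [wleB, Bool.and_eq_true] at h
    simp [wleB_length A B h.2]
  | [], _ :: _, h => by simp [wleB] at h
  | _ :: _, [], h => by simp [wleB] at h

lemma chk_append_singleton : ∀ (E : List Bool) (b : Bool), chk (E ++ [b]) = E ++ [!b]
  | [], b => rfl
  | [a], b => rfl
  | a :: c :: rest, b => by
    have := chk_append_singleton (c :: rest) b
    simp only [List.cons_append, chk] at this ⊢
    simp [this]

lemma sum_filter_succ (m : ℕ) (G : List Bool) (g : List Bool → ℚ) :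
    ∑ F' ∈ (allWords (m+1)).filter (fun F' => wleB F' (true :: G)), g F' =
      ∑ G' ∈ (allWords m).filter (fun G' => wleB G' G), (g (false :: G') + g (true :: G')) := by
  have hinj : ∀ b : Bool, Function.Injective (List.cons b) := by
    intro b x y h; exact (List.cons.injEq b x b y ▸ h).2
  rw [show allWords (m+1) = (allWords m).image (List.cons false) ∪ (allWords m).image (List.cons true) from rfl]
  rw [Finset.filter_union, Finset.sum_union]
  · rw [Finset.filter_image, Finset.filter_image, Finset.sum_image (fun x _ y _ h => hinj false h),
      Finset.sum_image (fun x _ y _ h => hinj true h)]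
    simp only [wleB, Bool.not_false, Bool.not_true, Bool.true_or, Bool.false_or, Bool.true_and]
    rw [← Finset.sum_add_distrib]
  · rw [Finset.disjoint_left]
    rintro a ha hb
    simp only [Finset.mem_filter, Finset.mem_image] at ha hb
    obtain ⟨⟨x, _, rfl⟩, _⟩ := ha
    obtain ⟨⟨y, _, hy⟩, _⟩ := hb
    simp at hy

theorem dualBB_sum_complement (n : ℕ) (hn : 1 ≤ n) (β : List Bool → ℚ)
    (hβ : DualBB n β) (E F : List Bool) (hlen : E.length + F.length = n)
    (hF : F = [] ∨ F.head? = some true) :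
    ∑ F' ∈ (allWords F.length).filter (fun F' => wleB F' F), β (E ++ F') =
      ∑ F' ∈ (allWords F.length).filter (fun F' => wleB F' F), β (E ++ comp F') := by
  match F, hF with
  | [], _ =>
    refine Finset.sum_congr rfl (fun x hx => ?_)
    simp only [List.length_nil, allWords, Finset.mem_filter, Finset.mem_singleton] at hx
    obtain ⟨rfl, -⟩ := hx; rfl
  | b :: G, hF =>
    have hb : b = true := by
      rcases hF with h | h
      · exact absurd h (by simp)
      · simpa using h
    subst hb
    simp only [List.length_cons] at hlen ⊢
    rw [sum_filter_succ G.length G (fun F' => β (E ++ F')),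
        sum_filter_succ G.length G (fun F' => β (E ++ comp F'))]
    refine Finset.sum_congr rfl (fun G' hG' => ?_)
    rw [Finset.mem_filter] at hG'
    have hlenG : G'.length = G.length := wleB_length _ _ hG'.2
    have hrel := hβ (E ++ [false]) G' (by
      simp [List.length_append, hlenG]
      omega)
    have hchk : chk (E ++ [false]) = E ++ [true] := by
      simpa using chk_append_singleton E false
    rw [hchk] at hrel
    have h1 : E ++ false :: G' = (E ++ [false]) ++ G' := by simp
    have h2 : E ++ true :: G' = (E ++ [true]) ++ G' := by simp
    have h3 : comp (false :: G') = true :: comp G' := rfl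
    have h4 : comp (true :: G') = false :: comp G' := rfl
    simp only [h1, h2, h3, h4]
    have h5 : E ++ true :: comp G' = (E ++ [true]) ++ comp G' := by simp
    have h6 : E ++ false :: comp G' = (E ++ [false]) ++ comp G' := by simp
    rw [h5, h6]
    linarith [hrel]
end

section
/- For every n ≥ 1, the set of functions β from 0-1 words of length n to ℚ satisfying the dual Bayer–Billera relations is a ℚ-vector subspace of the space of all such functions, of dimension at least f_{n+1}, where f_m is the m-th Fibonacci number (f_0 = 0, f_1 = 1, f_m = f_{m−1} + f_{m−2}). -/
/-- The space of dual-BB functions supported on length-`n` words. -/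
def Wsub (n : ℕ) : Submodule ℚ (List Bool → ℚ) where
  carrier := {β | DualBB n β ∧ ∀ E : List Bool, E.length ≠ n → β E = 0}
  add_mem' := by
    rintro a b ⟨ha1, ha2⟩ ⟨hb1, hb2⟩
    refine ⟨fun E F h => ?_, fun E h => ?_⟩
    · have h1 := ha1 E F h
      have h2 := hb1 E F h
      simp only [Pi.add_apply]
      linarith
    · simp [ha2 E h, hb2 E h]
  zero_mem' := ⟨fun E F h => by simp, fun E h => rfl⟩
  smul_mem' := by
    rintro c a ⟨ha1, ha2⟩
    refine ⟨fun E F h => ?_, fun E h => ?_⟩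
    · have h1 := ha1 E F h
      simp only [Pi.smul_apply, smul_eq_mul]
      linear_combination c * h1
    · simp [ha2 E h]

lemma comp_inv {m : ℕ} {β : List Bool → ℚ} (h : DualBB m β) (F : List Bool)
    (hF : F.length = m) : β F = β (comp F) := by
  have := h [] F (by simpa using hF)
  simp only [chk, List.nil_append] at this
  linarith

def t1 (β : List Bool → ℚ) : List Bool → ℚ
  | [] => 0
  | _ :: E => β E

def cc (a b : Bool) : ℚ := if a = b then 1 else 0

def t2 (β : List Bool → ℚ) : List Bool → ℚ
  | a :: b :: E => cc a b * β E
  | _ => 0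

lemma cc_not_not (a b : Bool) : cc (!a) (!b) = cc a b := by
  cases a <;> cases b <;> simp [cc]

lemma cc_sum_left (a b : Bool) : cc a b + cc (!a) b = 1 := by
  cases a <;> cases b <;> simp [cc]

lemma cc_sum_right (a b : Bool) : cc a b + cc a (!b) = 1 := by
  cases a <;> cases b <;> simp [cc]

lemma comp_cons (b : Bool) (G : List Bool) : comp (b :: G) = (!b) :: comp G := rfl

lemma t1_mem {n : ℕ} {β : List Bool → ℚ} (hβ : β ∈ Wsub (n+1)) : t1 β ∈ Wsub (n+2) := by
  obtain ⟨hD, hS⟩ := hβ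
  refine ⟨fun E F hlen => ?_, fun E h => ?_⟩
  · rcases E with _ | ⟨b, _ | ⟨c, E⟩⟩
    · rcases F with _ | ⟨d, G⟩
      · simp at hlen
      · have hG : G.length = n + 1 := by simp at hlen; omega
        have := comp_inv hD G hG
        simp only [chk, List.nil_append, comp_cons, t1]
        linarith
    · have hF : F.length = n + 1 := by simp at hlen; omega
      have := comp_inv hD F hF
      simp only [chk, List.cons_append, List.nil_append, t1]
      linarith
    · have h' := hD (c :: E) F (by simp at hlen ⊢; omega)
      simp only [chk, List.cons_append, t1]
      simpa using h'
  · rcases E with _ | ⟨b, E⟩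
    · rfl
    · have : E.length ≠ n + 1 := by simpa using h
      exact hS E this

lemma t2_mem {n : ℕ} {β : List Bool → ℚ} (hβ : β ∈ Wsub n) : t2 β ∈ Wsub (n+2) := by
  obtain ⟨hD, hS⟩ := hβ
  refine ⟨fun E F hlen => ?_, fun E h => ?_⟩
  · rcases E with _ | ⟨b, _ | ⟨c, _ | ⟨d, E⟩⟩⟩
    · rcases F with _ | ⟨a, _ | ⟨a', G⟩⟩
      · simp at hlen
      · simp at hlen
      · have hG : G.length = n := by simp at hlen; omega
        have := comp_inv hD G hG
        simp only [chk, List.nil_append, comp_cons, t2, cc_not_not]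
        rw [this]
    · rcases F with _ | ⟨a, G⟩
      · simp at hlen
      · have hG : G.length = n := by simp at hlen; omega
        have hc := comp_inv hD G hG
        simp only [chk, List.cons_append, List.nil_append, comp_cons, t2]
        have e1 := cc_sum_left b a
        have e2 := cc_sum_left b (!a)
        rw [hc]
        linear_combination β (comp G) * e1 - β (comp G) * e2
    · have hF : F.length = n := by simp at hlen; omega
      have hc := comp_inv hD F hF
      simp only [chk, List.cons_append, List.nil_append, t2]
      rw [hc]
    · have h' := hD (d :: E) F (by simp at hlen ⊢; omega)
      simp only [chk, List.cons_append, t2] at h' ⊢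
      linear_combination cc b c * h'
  · rcases E with _ | ⟨b, _ | ⟨c, E⟩⟩
    · rfl
    · rfl
    · have : E.length ≠ n := by simpa using h
      simp [t2, hS E this]

def pairMap (n : ℕ) : (↥(Wsub (n+1)) × ↥(Wsub n)) →ₗ[ℚ] ↥(Wsub (n+2)) where
  toFun p := ⟨t1 p.1.1 + t2 p.2.1, add_mem (t1_mem p.1.2) (t2_mem p.2.2)⟩
  map_add' p q := by
    apply Subtype.ext
    funext L
    rcases L with _ | ⟨a, _ | ⟨b, L⟩⟩ <;>
      simp [t1, t2] <;> ring
  map_smul' c p := by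
    apply Subtype.ext
    funext L
    rcases L with _ | ⟨a, _ | ⟨b, L⟩⟩ <;>
      simp [t1, t2] <;> ring

lemma pairMap_inj (n : ℕ) : Function.Injective (pairMap n) := by
  rw [injective_iff_map_eq_zero]
  rintro ⟨⟨β, hβ⟩, ⟨γ, hγ⟩⟩ hp
  have h0 : t1 β + t2 γ = 0 := Subtype.ext_iff.mp hp
  have e : ∀ L, t1 β L + t2 γ L = 0 := fun L => congrFun h0 L
  have hγ0 : ∀ E, γ E = 0 := by
    intro E
    have e1 := e (false :: false :: E)
    have e2 := e (true :: false :: E)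
    simp only [t1, t2, cc] at e1 e2
    norm_num at e1 e2
    linarith
  have hβ0 : ∀ L, β L = 0 := by
    intro L
    rcases L with _ | ⟨b, E⟩
    · exact hβ.2 [] (by simp)
    · have e2 := e ((!b) :: b :: E)
      simp only [t1, t2] at e2
      have : cc (!b) b = 0 := by cases b <;> simp [cc]
      rw [this] at e2
      linarith
  refine Prod.ext (Subtype.ext (funext hβ0)) (Subtype.ext (funext hγ0))

lemma rank_Wsub_fib : ∀ n : ℕ, (Nat.fib (n + 1) : Cardinal) ≤ Module.rank ℚ (Wsub n)
  | 0 => by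
    have hmem : (fun L : List Bool => if L = [] then (1:ℚ) else 0) ∈ Wsub 0 := by
      refine ⟨fun E F h => ?_, fun E h => ?_⟩
      · have hE : E = [] := List.length_eq_zero_iff.mp (by omega)
        have hF : F = [] := List.length_eq_zero_iff.mp (by omega)
        subst hE; subst hF; rfl
      · show (if E = [] then (1:ℚ) else 0) = 0
        rw [if_neg]; rintro rfl; exact h rfl
    have : Nontrivial ↥(Wsub 0) := by
      refine ⟨⟨⟨_, hmem⟩, 0, fun h => ?_⟩⟩
      have := congrFun (Subtype.ext_iff.mp h) []
      simp at this
    simpa using Cardinal.one_le_iff_pos.mpr (rank_pos (R := ℚ) (M := ↥(Wsub 0)))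
  | 1 => by
    have hmem : (fun L : List Bool => if L.length = 1 then (1:ℚ) else 0) ∈ Wsub 1 := by
      have chk_len : ∀ E : List Bool, (chk E).length = E.length := by
        intro E
        induction E with
        | nil => rfl
        | cons b E ih =>
          cases E with
          | nil => rfl
          | cons c R => simpa [chk] using ih
      refine ⟨fun E F h => ?_, fun E h => ?_⟩
      · have l1 : (E ++ F).length = 1 := by simp; omega
        have l2 : (chk E ++ F).length = 1 := by simp [chk_len]; omega
        have l3 : (E ++ comp F).length = 1 := by simp [comp]; omega
        have l4 : (chk E ++ comp F).length = 1 := by simp [comp, chk_len]; omega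
        simp [l1, l2, l3, l4]
      · show (if E.length = 1 then (1:ℚ) else 0) = 0
        rw [if_neg h]
    have : Nontrivial ↥(Wsub 1) := by
      refine ⟨⟨⟨_, hmem⟩, 0, fun h => ?_⟩⟩
      have := congrFun (Subtype.ext_iff.mp h) [false]
      simp at this
    simpa using Cardinal.one_le_iff_pos.mpr (rank_pos (R := ℚ) (M := ↥(Wsub 1)))
  | (n + 2) => by
    haveI : Module.Free ℚ ↥(Wsub (n+1)) := Module.Free.of_divisionRing ℚ _
    haveI : Module.Free ℚ ↥(Wsub n) := Module.Free.of_divisionRing ℚ _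
    have h1 := rank_Wsub_fib (n + 1)
    have h2 := rank_Wsub_fib n
    calc (Nat.fib (n + 3) : Cardinal)
        = (Nat.fib (n + 2) : Cardinal) + (Nat.fib (n + 1) : Cardinal) := by
          rw [show n + 3 = (n + 1) + 2 from rfl, Nat.fib_add_two]
          push_cast; ring
      _ ≤ Module.rank ℚ ↥(Wsub (n+1)) + Module.rank ℚ ↥(Wsub n) := add_le_add h1 h2
      _ = Module.rank ℚ (↥(Wsub (n+1)) × ↥(Wsub n)) := (rank_prod').symm
      _ ≤ Module.rank ℚ ↥(Wsub (n+2)) :=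
          LinearMap.rank_le_of_injective _ (pairMap_inj n)

theorem dualBB_subspace_dim_ge_fib (n : ℕ) (hn : 1 ≤ n) :
    ∃ W : Submodule ℚ (List Bool → ℚ),
      (W : Set (List Bool → ℚ)) =
        {β | DualBB n β ∧ ∀ E : List Bool, E.length ≠ n → β E = 0} ∧
      (Nat.fib (n + 1) : Cardinal) ≤ Module.rank ℚ W := by
  exact ⟨Wsub n, rfl, rank_Wsub_fib n⟩
end

section
/- Let n ≥ 1, let β be a function assigning a rational number to every 0-1 word of length n, and let P = Σ_{E} β_E μ_E ∈ A, the sum over all 0-1 words E of length n, where μ_E = μ_{E_1}⋯μ_{E_n} with μ_0 = a and μ_1 = b. Then P belongs to the unital ℚ-subalgebra of A generated by a + b and ab + ba if and only if β satisfies the dual Bayer–Billera relations. -/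
/-- The free associative `ℚ`-algebra on the two noncommuting generators `a`, `b`. -/
abbrev FreeA := FreeAlgebra ℚ Bool

/-- The generator `a`. -/
noncomputable def gena : FreeA := FreeAlgebra.ι ℚ false

/-- The generator `b`. -/
noncomputable def genb : FreeA := FreeAlgebra.ι ℚ true

/-- The monomial `μ_E = μ_{E_1} ⋯ μ_{E_n}`, where `μ_0 = a` and `μ_1 = b`. -/
noncomputable def mu (E : List Bool) : FreeA :=
  (E.map (fun e => FreeAlgebra.ι ℚ e)).prod

/-! ### Auxiliary combinatorics -/

/-- whether all maximal runs of `true` have even length -/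
def goodB : List Bool → Bool
  | [] => true
  | false :: l => goodB l
  | true :: true :: l => goodB l
  | true :: _ => false

lemma chk_concat (E : List Bool) (x : Bool) : chk (E ++ [x]) = E ++ [!x] := by
  induction E with
  | nil => rfl
  | cons a E ih =>
    cases E with
    | nil => simp [chk]
    | cons b E => simpa [chk] using ih

lemma chk_length (E : List Bool) : (chk E).length = E.length := by
  induction E using chk.induct with
  | case1 => rfl
  | case2 b => rfl
  | case3 b c rest ih => simpa [chk] using ih

lemma chk_chk (E : List Bool) : chk (chk E) = E := by
  induction E using chk.induct with
  | case1 => rfl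
  | case2 b => simp [chk]
  | case3 b c rest ih =>
    show chk (b :: chk (c :: rest)) = _
    have hne : chk (c :: rest) ≠ [] := by
      intro hc
      have := chk_length (c :: rest)
      rw [hc] at this
      simp at this
    obtain ⟨x, xs, hx⟩ := List.exists_cons_of_ne_nil hne
    rw [hx, show chk (b :: x :: xs) = b :: chk (x :: xs) from rfl, ← hx, ih]

lemma comp_length (E : List Bool) : (comp E).length = E.length := by simp [comp]

lemma comp_comp (E : List Bool) : comp (comp E) = E := by
  simp [comp, List.map_map, Function.comp_def]

lemma not_good_aux {tail : List Bool} (h1 : ∀ (l : List Bool), tail = true :: l → False)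
    (h : goodB (true :: tail) = true) : False := by
  cases tail with
  | nil => exact absurd h (by simp [goodB])
  | cons x l => cases x with
    | false => exact absurd h (by simp [goodB])
    | true => exact h1 l rfl

lemma goodB_append {u : List Bool} (hu : goodB u) : ∀ {v : List Bool}, goodB v → goodB (u ++ v) := by
  induction u using goodB.induct with
  | case1 => intro v hv; simpa
  | case2 l ih => simp only [goodB] at hu; intro v hv; simpa [goodB] using ih hu hv
  | case3 l ih => simp only [goodB] at hu; intro v hv; simpa [goodB] using ih hu hv
  | case4 tail h1 => exact absurd hu (by intro h; exact not_good_aux h1 h)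

lemma even_count_of_good {w : List Bool} (h : goodB w) : Even (w.count true) := by
  induction w using goodB.induct with
  | case1 => simp
  | case2 l ih => simpa using ih (by simpa [goodB] using h)
  | case3 l ih =>
    have := ih (by simpa [goodB] using h)
    simpa [List.count_cons, Nat.even_add_one, Nat.not_even_iff_odd, Nat.odd_add_one,
      Nat.not_odd_iff_even] using this
  | case4 tail h1 => exact absurd h (by intro h; exact not_good_aux h1 h)

lemma good_suffix {v : List Bool} : ∀ {u : List Bool}, goodB (u ++ v) →
    (u = [] ∨ u.getLast? = some false) → goodB v := by
  intro u
  induction u using goodB.induct with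
  | case1 => intro h _; simpa using h
  | case2 l ih =>
    intro h hl
    refine ih (by simpa [goodB] using h) ?_
    cases l with
    | nil => exact Or.inl rfl
    | cons x l => right; rcases hl with h' | h'; · exact absurd h' (by simp)
                  · simpa using h'
  | case3 l ih =>
    intro h hl
    refine ih (by simpa [goodB] using h) ?_
    cases l with
    | nil => rcases hl with h' | h' <;> simp_all
    | cons x l => right; rcases hl with h' | h'; · exact absurd h' (by simp)
                  · simpa using h'
  | case4 tail h1 =>
    intro h hl
    cases tail with
    | nil => rcases hl with h' | h' <;> simp_all
    | cons x l =>
      cases x with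
      | true => exact absurd rfl (h1 l)
      | false => exact absurd h (by simp [goodB])

theorem bad_split : ∀ (w : List Bool), ¬ (goodB w = true) →
    ∃ u v, w = u ++ v ∧ (u = [] ∨ u.getLast? = some false) ∧ Odd (v.count true)
  | [], h => absurd rfl h
  | false :: l, h => by
    obtain ⟨u, v, rfl, hu, hv⟩ := bad_split l (by simpa [goodB] using h)
    refine ⟨false :: u, v, rfl, ?_, hv⟩
    right
    cases u with
    | nil => simp
    | cons x u => rcases hu with h' | h'; · exact absurd h' (by simp)
                  · simpa using h'
  | [true], _ => ⟨[], [true], rfl, Or.inl rfl, by simp⟩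
  | true :: true :: l, h => by
    obtain ⟨u, v, hw, hu, hv⟩ := bad_split l (by simpa [goodB] using h)
    cases u with
    | nil =>
      refine ⟨[], true :: true :: l, rfl, Or.inl rfl, ?_⟩
      simp only [List.nil_append] at hw; subst hw
      simpa [List.count_cons, Nat.odd_add_one, Nat.not_odd_iff_even, Nat.even_add_one,
        Nat.not_even_iff_odd] using hv
    | cons x u =>
      refine ⟨true :: true :: x :: u, v, by simp [hw], ?_, hv⟩
      right
      rcases hu with h' | h'; · exact absurd h' (by simp)
      · simpa using h'
  | true :: false :: l, h => by
    by_cases hg : goodB l = true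
    · refine ⟨[], true :: false :: l, rfl, Or.inl rfl, ?_⟩
      have := even_count_of_good hg
      simpa [List.count_cons, Nat.odd_add_one, Nat.not_odd_iff_even] using this
    · obtain ⟨u, v, hw, hu, hv⟩ := bad_split l hg
      refine ⟨true :: false :: u, v, by simp [hw], ?_, hv⟩
      right
      cases u with
      | nil => simp
      | cons y u => rcases hu with h' | h'; · exact absurd h' (by simp)
                    · simpa using h'

/-! ### Words and signs -/

lemma mem_allWords : ∀ {n : ℕ} {E : List Bool}, E ∈ allWords n ↔ E.length = n
  | 0, E => by
    constructor
    · intro h; simp [allWords] at h; simp [h]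
    · intro h; simp [allWords, List.length_eq_zero_iff.mp h]
  | n + 1, E => by
    simp only [allWords, Finset.mem_union, Finset.mem_image]
    constructor
    · rintro (⟨E₀, h, rfl⟩ | ⟨E₀, h, rfl⟩) <;> simp [mem_allWords.mp h]
    · intro h
      cases E with
      | nil => simp at h
      | cons x E₀ =>
        have : E₀ ∈ allWords n := mem_allWords.mpr (by simpa using h)
        cases x
        · exact Or.inl ⟨E₀, this, rfl⟩
        · exact Or.inr ⟨E₀, this, rfl⟩

lemma sum_allWords_succ {M : Type*} [AddCommMonoid M] (n : ℕ) (f : List Bool → M) :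
    ∑ w ∈ allWords (n+1), f w
      = (∑ w ∈ allWords n, f (false :: w)) + ∑ w ∈ allWords n, f (true :: w) := by
  have hdisj : Disjoint ((allWords n).image (List.cons false))
      ((allWords n).image (List.cons true)) := by
    rw [Finset.disjoint_left]
    rintro a ha hb
    simp only [Finset.mem_image] at ha hb
    obtain ⟨_, _, rfl⟩ := ha
    obtain ⟨_, _, h⟩ := hb
    simp at h
  rw [show allWords (n+1)
      = (allWords n).image (List.cons false) ∪ (allWords n).image (List.cons true) from rfl,
    Finset.sum_union hdisj, Finset.sum_image (by intros; simp_all),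
    Finset.sum_image (by intros; simp_all)]

/-- the sign `(-1)^{#{i : w_i ∧ E_i}}` -/
def sgn (w E : List Bool) : ℚ := (-1 : ℚ) ^ ((List.zipWith (· && ·) w E).count true)

lemma sgn_nil' (E : List Bool) : sgn [] E = 1 := rfl

lemma sgn_cons (x y : Bool) (w E : List Bool) :
    sgn (x :: w) (y :: E) = (if x && y then -1 else 1) * sgn w E := by
  simp only [sgn, List.zipWith_cons_cons, List.count_cons]
  cases h : (x && y) <;> simp [h, pow_succ]

lemma sgn_comm : ∀ (w E : List Bool), sgn w E = sgn E w
  | [], [] => rfl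
  | [], _ :: _ => rfl
  | _ :: _, [] => rfl
  | x :: w, y :: E => by
    rw [sgn_cons, sgn_cons, sgn_comm w E, Bool.and_comm]

lemma sgn_append {w₁ E : List Bool} (h : w₁.length = E.length) (w₂ F : List Bool) :
    sgn (w₁ ++ w₂) (E ++ F) = sgn w₁ E * sgn w₂ F := by
  induction w₁ generalizing E with
  | nil => rw [List.length_eq_zero_iff.mp h.symm]; simp [sgn_nil']
  | cons x w₁ ih =>
    cases E with
    | nil => simp at h
    | cons y E =>
      simp only [List.cons_append, sgn_cons, ih (by simpa using h)]
      ring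

lemma sgn_comp : ∀ {w F : List Bool}, w.length = F.length →
    sgn w (comp F) = (-1 : ℚ) ^ (w.count true) * sgn w F
  | [], F, h => by rw [List.length_eq_zero_iff.mp h.symm]; simp [sgn_nil', comp]
  | x :: w, [], h => by simp at h
  | x :: w, y :: F, h => by
    have ih := sgn_comp (w := w) (F := F) (by simpa using h)
    show sgn (x :: w) ((!y) :: comp F) = _
    rw [sgn_cons, sgn_cons, ih, List.count_cons]
    cases x <;> cases y <;> simp [pow_succ] <;> ring

lemma sgn_chk : ∀ {E w : List Bool}, w.length = E.length →
    sgn w (chk E) = (if w.getLast? = some true then -1 else 1) * sgn w E := by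
  intro E
  induction E using chk.induct with
  | case1 =>
    intro w h
    rw [List.length_eq_zero_iff.mp h]
    simp [chk, sgn_nil']
  | case2 b =>
    intro w h
    obtain ⟨y, rfl⟩ : ∃ y, w = [y] := by
      cases w with
      | nil => simp at h
      | cons y w => cases w with
        | nil => exact ⟨y, rfl⟩
        | cons z w => simp at h
    show sgn [y] [!b] = _
    cases y <;> cases b <;> simp [sgn_cons, sgn_nil']
  | case3 b c rest ih =>
    intro w h
    cases w with
    | nil => simp at h
    | cons y w' =>
      have hw' : w'.length = (c :: rest).length := by simpa using h
      have hne : w' ≠ [] := by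
        intro hc; rw [hc] at hw'; simp at hw'
      show sgn (y :: w') (b :: chk (c :: rest)) = _
      rw [sgn_cons, ih hw', sgn_cons]
      have : (y :: w').getLast? = w'.getLast? := by
        obtain ⟨z, zs, rfl⟩ := List.exists_cons_of_ne_nil hne
        simp [List.getLast?_cons_cons]
      rw [this]
      ring

lemma sgn_sq {w E : List Bool} : sgn w E * sgn w E = 1 := by
  rw [sgn, ← pow_add]
  exact Even.neg_one_pow ⟨_, rfl⟩

lemma orth {n : ℕ} : ∀ {w w' : List Bool}, w.length = n → w'.length = n →
    (∑ E ∈ allWords n, sgn w E * sgn w' E) = if w = w' then (2:ℚ)^n else 0 := by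
  induction n with
  | zero =>
    intro w w' hw hw'
    rw [List.length_eq_zero_iff.mp hw, List.length_eq_zero_iff.mp hw']
    simp [allWords, sgn_nil']
  | succ n ih =>
    intro w w' hw hw'
    cases w with | nil => simp at hw | cons x w =>
    cases w' with | nil => simp at hw' | cons x' w' =>
    rw [sum_allWords_succ]
    simp only [sgn_cons]
    have h1 : ∀ E, ((if x && false then (-1:ℚ) else 1) * sgn w E)
        * ((if x' && false then (-1:ℚ) else 1) * sgn w' E) = sgn w E * sgn w' E := by
      intro E; simp
    have h2 : ∀ E, ((if x && true then (-1:ℚ) else 1) * sgn w E)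
        * ((if x' && true then (-1:ℚ) else 1) * sgn w' E)
        = ((if x then (-1:ℚ) else 1) * (if x' then (-1:ℚ) else 1)) * (sgn w E * sgn w' E) := by
      intro E; simp only [Bool.and_true]; ring
    simp only [h1, h2]
    rw [← Finset.mul_sum, ih (by simpa using hw) (by simpa using hw')]
    by_cases hww : w = w'
    · subst hww
      by_cases hxx : x = x'
      · subst hxx; cases x <;> simp [pow_succ] <;> ring
      · have : ¬ (x :: w = x' :: w) := by simp [hxx]
        rw [if_pos rfl, if_neg this]
        cases x <;> cases x' <;> simp_all
    · have h3 : ¬ (x :: w = x' :: w') := by simp [hww]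
      simp [hww, h3]

/-! ### Algebra -/

lemma mu_nil : mu [] = 1 := rfl
lemma mu_cons (x : Bool) (E : List Bool) : mu (x :: E) = FreeAlgebra.ι ℚ x * mu E := by
  simp [mu]
lemma mu_append (E F : List Bool) : mu (E ++ F) = mu E * mu F := by
  simp [mu]

noncomputable def psi : FreeA →ₐ[ℚ] FreeA :=
  FreeAlgebra.lift ℚ (fun x => if x then gena - genb else gena + genb)

noncomputable def psi' : FreeA →ₐ[ℚ] FreeA :=
  FreeAlgebra.lift ℚ (fun x => if x then (2⁻¹:ℚ) • (gena - genb) else (2⁻¹:ℚ) • (gena + genb))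

lemma psi_psi' (P : FreeA) : psi (psi' P) = P := by
  have : psi.comp psi' = AlgHom.id ℚ FreeA := by
    apply FreeAlgebra.hom_ext
    funext x
    cases x <;>
      · simp [psi, psi', gena, genb, smul_add, smul_sub]
        norm_num [← add_smul]
  exact congrFun (congrArg (fun f => f.toFun) this) P

noncomputable def coeffL (w : List Bool) : FreeA →ₗ[ℚ] ℚ :=
  ((Finsupp.lapply (FreeMonoid.ofList w)).comp (MonoidAlgebra.coeffLinearEquiv ℚ).toLinearMap).comp
    (FreeAlgebra.equivMonoidAlgebraFreeMonoid (R := ℚ) (X := Bool)).toLinearMap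

lemma equiv_mu (v : List Bool) :
    FreeAlgebra.equivMonoidAlgebraFreeMonoid (R := ℚ) (X := Bool) (mu v)
      = MonoidAlgebra.single (FreeMonoid.ofList v) 1 := by
  induction v with
  | nil =>
    rw [mu_nil, map_one, MonoidAlgebra.one_def]
    rfl
  | cons x v ih =>
    rw [mu_cons, map_mul, ih]
    rw [show FreeAlgebra.equivMonoidAlgebraFreeMonoid (R := ℚ) (FreeAlgebra.ι ℚ x)
        = MonoidAlgebra.single (FreeMonoid.of x) 1 from by
      simp [FreeAlgebra.equivMonoidAlgebraFreeMonoid]]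
    rw [MonoidAlgebra.single_mul_single, one_mul]
    congr 1

lemma coeffL_mu (w v : List Bool) : coeffL w (mu v) = if v = w then 1 else 0 := by
  rw [coeffL, LinearMap.comp_apply, LinearMap.comp_apply]
  erw [AlgEquiv.toLinearMap_apply, equiv_mu]
  rw [Finsupp.lapply_apply]
  change (Finsupp.single (FreeMonoid.ofList v) (1:ℚ)) (FreeMonoid.ofList w) = _
  by_cases h : v = w
  · subst h; rw [if_pos rfl]; exact Finsupp.single_eq_same
  · rw [if_neg h]
    exact Finsupp.single_eq_of_ne (fun hc => h (FreeMonoid.ofList.injective hc.symm))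

lemma good_mu_mem : ∀ {w : List Bool}, goodB w →
    mu w ∈ Algebra.adjoin ℚ ({gena, genb * genb} : Set FreeA) := by
  intro w
  induction w using goodB.induct with
  | case1 => intro _; rw [mu_nil]; exact one_mem _
  | case2 l ih =>
    intro h
    rw [mu_cons]
    exact mul_mem (Algebra.subset_adjoin (by simp [gena])) (ih (by simpa [goodB] using h))
  | case3 l ih =>
    intro h
    rw [mu_cons, mu_cons, ← mul_assoc]
    exact mul_mem (Algebra.subset_adjoin (by simp [genb])) (ih (by simpa [goodB] using h))
  | case4 tail h1 =>
    intro h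
    exact absurd h (by intro h; exact not_good_aux h1 h)

lemma closure_good {x : FreeA} (hx : x ∈ Submonoid.closure ({gena, genb * genb} : Set FreeA)) :
    ∃ v, goodB v = true ∧ x = mu v := by
  induction hx using Submonoid.closure_induction with
  | mem y hy =>
    rcases hy with h | h
    · exact ⟨[false], rfl, by rw [h]; simp [mu_cons, mu_nil, gena]⟩
    · exact ⟨[true, true], rfl, by rw [h]; simp [mu_cons, mu_nil, genb]⟩
  | one => exact ⟨[], rfl, rfl⟩
  | mul y z _ _ hy hz =>
    obtain ⟨v, hv, rfl⟩ := hy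
    obtain ⟨u, hu, rfl⟩ := hz
    exact ⟨v ++ u, goodB_append hv hu, (mu_append v u).symm⟩

lemma coeff_zero_of_mem_adjoin {x : FreeA}
    (hx : x ∈ Algebra.adjoin ℚ ({gena, genb * genb} : Set FreeA))
    {w : List Bool} (hw : ¬ (goodB w = true)) : coeffL w x = 0 := by
  have hspan : x ∈ Submodule.span ℚ ((Submonoid.closure ({gena, genb * genb} : Set FreeA)) : Set FreeA) := by
    rw [← Algebra.adjoin_eq_span]
    exact hx
  clear hx
  induction hspan using Submodule.span_induction with
  | mem y hy =>
    obtain ⟨v, hv, rfl⟩ := closure_good hy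
    rw [coeffL_mu, if_neg]
    intro hc; subst hc; exact hw hv
  | zero => exact map_zero _
  | add y z _ _ hy hz => rw [map_add, hy, hz, add_zero]
  | smul c y _ hy => rw [map_smul, hy, smul_zero]
lemma psi'_iota (e : Bool) : psi' (FreeAlgebra.ι ℚ e)
    = (2⁻¹:ℚ) • gena + ((2⁻¹:ℚ) * (if e then -1 else 1)) • genb := by
  cases e <;> simp [psi', smul_add, smul_sub, sub_eq_add_neg, neg_smul] <;> norm_num

lemma psi'_mu : ∀ (E : List Bool), psi' (mu E)
    = ∑ w ∈ allWords E.length, ((2⁻¹:ℚ)^E.length * sgn w E) • mu w := by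
  intro E
  induction E with
  | nil => simp [allWords, mu_nil, sgn_nil']
  | cons e E ih =>
    rw [mu_cons, map_mul, ih, psi'_iota, List.length_cons, sum_allWords_succ]
    rw [add_mul, smul_mul_assoc, smul_mul_assoc, Finset.mul_sum, Finset.mul_sum,
      Finset.smul_sum, Finset.smul_sum]
    congr 1
    · apply Finset.sum_congr rfl
      intro w hw
      rw [mul_smul_comm, smul_smul, mu_cons, sgn_cons,
        show (FreeAlgebra.ι ℚ false : FreeA) = gena from rfl]
      congr 1
      simp [pow_succ]
      try ring
    · apply Finset.sum_congr rfl
      intro w hw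
      rw [mul_smul_comm, smul_smul, mu_cons, sgn_cons,
        show (FreeAlgebra.ι ℚ true : FreeA) = genb from rfl]
      congr 1
      simp only [Bool.true_and, pow_succ]
      ring

/-- the (unnormalized) Fourier transform of `β` -/
def hatb (n : ℕ) (β : List Bool → ℚ) (w : List Bool) : ℚ :=
  ∑ E ∈ allWords n, sgn w E * β E

lemma psi'_P (n : ℕ) (β : List Bool → ℚ) :
    psi' (∑ E ∈ allWords n, β E • mu E)
      = ∑ w ∈ allWords n, ((2⁻¹:ℚ)^n * hatb n β w) • mu w := by
  rw [map_sum]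
  have : ∀ E ∈ allWords n, psi' (β E • mu E)
      = ∑ w ∈ allWords n, (β E * ((2⁻¹:ℚ)^n * sgn w E)) • mu w := by
    intro E hE
    rw [map_smul, psi'_mu E, mem_allWords.mp hE, Finset.smul_sum]
    apply Finset.sum_congr rfl
    intro w hw
    rw [smul_smul]
  rw [Finset.sum_congr rfl this, Finset.sum_comm]
  apply Finset.sum_congr rfl
  intro w hw
  rw [← Finset.sum_smul]
  congr 1
  rw [hatb, Finset.mul_sum]
  exact Finset.sum_congr rfl fun E _ => by ring

lemma mem_adjoin_iff (P : FreeA) :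
    P ∈ Algebra.adjoin ℚ ({gena + genb, gena * genb + genb * gena} : Set FreeA) ↔
      psi' P ∈ Algebra.adjoin ℚ ({gena, genb * genb} : Set FreeA) := by
  constructor
  · intro h
    have hmap : (Algebra.adjoin ℚ ({gena + genb, gena * genb + genb * gena} : Set FreeA)).map psi'
        ≤ Algebra.adjoin ℚ ({gena, genb * genb} : Set FreeA) := by
      rw [AlgHom.map_adjoin]
      apply Algebra.adjoin_le
      rintro x ⟨y, hy, rfl⟩
      rcases hy with rfl | rfl
      · have : psi' (gena + genb) = gena := by
          rw [map_add, show psi' gena = (2⁻¹:ℚ) • (gena + genb) from by simp [psi', gena],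
            show psi' genb = (2⁻¹:ℚ) • (gena - genb) from by simp [psi', genb],
            ← smul_add]
          norm_num [show gena + genb + (gena - genb) = (2:ℚ) • gena from by
            rw [two_smul]; abel, smul_smul]
        rw [this]
        exact Algebra.subset_adjoin (by simp)
      · have hx : psi' (gena * genb + genb * gena)
            = (4⁻¹:ℚ) • ((gena + genb) * (gena - genb) + (gena - genb) * (gena + genb)) := by
          rw [map_add, map_mul, map_mul,
            show psi' gena = (2⁻¹:ℚ) • (gena + genb) from by simp [psi', gena],
            show psi' genb = (2⁻¹:ℚ) • (gena - genb) from by simp [psi', genb]]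
          rw [smul_mul_assoc, mul_smul_comm, smul_mul_assoc, mul_smul_comm,
            smul_smul, smul_smul, ← smul_add]
          norm_num
        rw [hx]
        apply Subalgebra.smul_mem
        have hgood : (gena + genb) * (gena - genb) + (gena - genb) * (gena + genb)
            = gena * gena + gena * gena - (genb * genb + genb * genb) := by
          noncomm_ring
        rw [hgood]
        have ha : gena ∈ Algebra.adjoin ℚ ({gena, genb * genb} : Set FreeA) :=
          Algebra.subset_adjoin (by simp)
        have hb2 : genb * genb ∈ Algebra.adjoin ℚ ({gena, genb * genb} : Set FreeA) :=
          Algebra.subset_adjoin (by simp)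
        exact sub_mem (add_mem (mul_mem ha ha) (mul_mem ha ha)) (add_mem hb2 hb2)
    exact hmap ⟨P, h, rfl⟩
  · intro h
    have hmap : (Algebra.adjoin ℚ ({gena, genb * genb} : Set FreeA)).map psi
        ≤ Algebra.adjoin ℚ ({gena + genb, gena * genb + genb * gena} : Set FreeA) := by
      rw [AlgHom.map_adjoin]
      apply Algebra.adjoin_le
      rintro x ⟨y, hy, rfl⟩
      rcases hy with rfl | rfl
      · rw [show psi gena = gena + genb from by simp [psi, gena]]
        exact Algebra.subset_adjoin (by simp)
      · rw [map_mul, show psi genb = gena - genb from by simp [psi, genb]]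
        have hgood : (gena - genb) * (gena - genb)
            = (gena + genb) * (gena + genb)
              - ((gena * genb + genb * gena) + (gena * genb + genb * gena)) := by
          noncomm_ring
        rw [hgood]
        have hc : gena + genb ∈ Algebra.adjoin ℚ
            ({gena + genb, gena * genb + genb * gena} : Set FreeA) :=
          Algebra.subset_adjoin (by simp)
        have hd : gena * genb + genb * gena ∈ Algebra.adjoin ℚ
            ({gena + genb, gena * genb + genb * gena} : Set FreeA) :=
          Algebra.subset_adjoin (by simp)
        exact sub_mem (mul_mem hc hc) (add_mem hd hd)
    have := hmap ⟨psi' P, h, rfl⟩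
    simpa [psi_psi'] using this
lemma sum_invol {n : ℕ} (σ : List Bool → List Bool) (hlen : ∀ G, G.length = n → (σ G).length = n)
    (hinv : ∀ G, G.length = n → σ (σ G) = G) (f : List Bool → ℚ) :
    ∑ G ∈ allWords n, f (σ G) = ∑ G ∈ allWords n, f G := by
  apply Finset.sum_nbij' (i := σ) (j := σ)
  · intro a ha
    exact mem_allWords.mpr (hlen a (mem_allWords.mp ha))
  · intro a ha
    exact mem_allWords.mpr (hlen a (mem_allWords.mp ha))
  · intro a ha
    exact hinv a (mem_allWords.mp ha)
  · intro a ha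
    exact hinv a (mem_allWords.mp ha)
  · intro a ha
    rfl

lemma V_of_dualBB {n : ℕ} {β : List Bool → ℚ} (h : DualBB n β) :
    ∀ {w : List Bool}, w ∈ allWords n → ¬ (goodB w = true) → hatb n β w = 0 := by
  intro w hw hbad
  obtain ⟨w₁, w₂, rfl, hu, hv⟩ := bad_split w hbad
  set k := w₁.length with hk
  have hwlen : w₁.length + w₂.length = n := by
    have := mem_allWords.mp hw
    simpa using this
  have hkn : k ≤ n := by omega
  set W := w₁ ++ w₂ with hW
  -- basic length facts
  have htake : ∀ G : List Bool, G.length = n → (G.take k).length = k := by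
    intro G hG; simp [hG]; omega
  have hdrop : ∀ G : List Bool, G.length = n → (G.drop k).length = n - k := by
    intro G hG; simp [hG]
  -- the three operations
  have keyK : ∀ G : List Bool, G.length = n →
      (chk (G.take k) ++ G.drop k).length = n ∧
      sgn W (chk (G.take k) ++ G.drop k) = sgn W G := by
    intro G hG
    constructor
    · rw [List.length_append, chk_length, htake G hG, hdrop G hG]; omega
    · have h1 : sgn W (chk (G.take k) ++ G.drop k)
          = sgn w₁ (chk (G.take k)) * sgn w₂ (G.drop k) :=
        sgn_append (by rw [chk_length, htake G hG]) _ _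
      have h2 : sgn w₁ (chk (G.take k)) = sgn w₁ (G.take k) := by
        rw [sgn_chk (by rw [htake G hG])]
        rcases hu with rfl | hu'
        · simp at hk
          simp [hk]
        · rw [hu']; simp
      have h3 : sgn W G = sgn w₁ (G.take k) * sgn w₂ (G.drop k) := by
        conv_lhs => rw [← List.take_append_drop k G]
        exact sgn_append (by rw [htake G hG]) _ _
      rw [h1, h2, h3]
  have keyC : ∀ G : List Bool, G.length = n →
      (G.take k ++ comp (G.drop k)).length = n ∧
      sgn W (G.take k ++ comp (G.drop k)) = - sgn W G := by
    intro G hG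
    constructor
    · rw [List.length_append, comp_length, htake G hG, hdrop G hG]; omega
    · have h1 : sgn W (G.take k ++ comp (G.drop k))
          = sgn w₁ (G.take k) * sgn w₂ (comp (G.drop k)) :=
        sgn_append (by rw [htake G hG]) _ _
      have h2 : sgn w₂ (comp (G.drop k)) = - sgn w₂ (G.drop k) := by
        rw [sgn_comp (by rw [hdrop G hG]; omega), Odd.neg_one_pow hv, neg_one_mul]
      have h3 : sgn W G = sgn w₁ (G.take k) * sgn w₂ (G.drop k) := by
        conv_lhs => rw [← List.take_append_drop k G]
        exact sgn_append (by rw [htake G hG]) _ _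
      rw [h1, h2, h3]; ring
  -- the relation summed against sgn
  have hrel : ∀ G ∈ allWords n,
      sgn W G * β G + sgn W G * β (chk (G.take k) ++ G.drop k)
        = sgn W G * β (G.take k ++ comp (G.drop k))
          + sgn W G * β (chk (G.take k) ++ comp (G.drop k)) := by
    intro G hG
    have hG' := mem_allWords.mp hG
    have := h (G.take k) (G.drop k) (by rw [htake G hG', hdrop G hG']; omega)
    rw [List.take_append_drop] at this
    rw [← mul_add, ← mul_add, this]
  -- sum the relation over all G
  have hsum := Finset.sum_congr rfl hrel
  rw [Finset.sum_add_distrib, Finset.sum_add_distrib] at hsum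
  -- identify the four sums
  have S0 : ∑ G ∈ allWords n, sgn W G * β G = hatb n β W := rfl
  -- the chk-sum
  have SK : ∑ G ∈ allWords n, sgn W G * β (chk (G.take k) ++ G.drop k) = hatb n β W := by
    set σ : List Bool → List Bool := fun G => chk (G.take k) ++ G.drop k with hσ
    have hσlen : ∀ G : List Bool, G.length = n → (σ G).length = n := fun G hG => (keyK G hG).1
    have hσinv : ∀ G : List Bool, G.length = n → σ (σ G) = G := by
      intro G hG
      show chk ((σ G).take k) ++ (σ G).drop k = G
      rw [show (σ G).take k = chk (G.take k) from List.take_left' (by rw [chk_length, htake G hG]),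
        show (σ G).drop k = G.drop k from List.drop_left' (by rw [chk_length, htake G hG]),
        chk_chk, List.take_append_drop]
    calc ∑ G ∈ allWords n, sgn W G * β (σ G)
        = ∑ G ∈ allWords n, (fun G' => sgn W (σ G') * β G') (σ G) := by
          apply Finset.sum_congr rfl
          intro G hG
          simp only
          rw [hσinv G (mem_allWords.mp hG)]
      _ = ∑ G ∈ allWords n, sgn W (σ G) * β G :=
          sum_invol σ hσlen hσinv (fun G' => sgn W (σ G') * β G')
      _ = hatb n β W := by
          apply Finset.sum_congr rfl
          intro G hG
          rw [(keyK G (mem_allWords.mp hG)).2]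
  have SC : ∑ G ∈ allWords n, sgn W G * β (G.take k ++ comp (G.drop k)) = - hatb n β W := by
    set σ : List Bool → List Bool := fun G => G.take k ++ comp (G.drop k) with hσ
    have hσlen : ∀ G : List Bool, G.length = n → (σ G).length = n := fun G hG => (keyC G hG).1
    have hσinv : ∀ G : List Bool, G.length = n → σ (σ G) = G := by
      intro G hG
      show (σ G).take k ++ comp ((σ G).drop k) = G
      rw [show (σ G).take k = G.take k from List.take_left' (htake G hG),
        show (σ G).drop k = comp (G.drop k) from List.drop_left' (htake G hG),
        comp_comp, List.take_append_drop]
    calc ∑ G ∈ allWords n, sgn W G * β (σ G)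
        = ∑ G ∈ allWords n, (fun G' => sgn W (σ G') * β G') (σ G) := by
          apply Finset.sum_congr rfl
          intro G hG
          simp only
          rw [hσinv G (mem_allWords.mp hG)]
      _ = ∑ G ∈ allWords n, sgn W (σ G) * β G :=
          sum_invol σ hσlen hσinv (fun G' => sgn W (σ G') * β G')
      _ = - hatb n β W := by
          rw [hatb, ← Finset.sum_neg_distrib]
          apply Finset.sum_congr rfl
          intro G hG
          rw [(keyC G (mem_allWords.mp hG)).2]
          ring
  have SB : ∑ G ∈ allWords n, sgn W G * β (chk (G.take k) ++ comp (G.drop k))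
      = - hatb n β W := by
    set σ : List Bool → List Bool := fun G => chk (G.take k) ++ comp (G.drop k) with hσ
    have hσlen : ∀ G : List Bool, G.length = n → (σ G).length = n := by
      intro G hG
      show (chk (G.take k) ++ comp (G.drop k)).length = n
      rw [List.length_append, chk_length, comp_length, htake G hG, hdrop G hG]; omega
    have hσinv : ∀ G : List Bool, G.length = n → σ (σ G) = G := by
      intro G hG
      show chk ((σ G).take k) ++ comp ((σ G).drop k) = G
      rw [show (σ G).take k = chk (G.take k) from List.take_left' (by rw [chk_length, htake G hG]),
        show (σ G).drop k = comp (G.drop k) from List.drop_left' (by rw [chk_length, htake G hG]),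
        chk_chk, comp_comp, List.take_append_drop]
    have hsgn : ∀ G : List Bool, G.length = n → sgn W (σ G) = - sgn W G := by
      intro G hG
      show sgn W (chk (G.take k) ++ comp (G.drop k)) = - sgn W G
      have h1 : sgn W (chk (G.take k) ++ comp (G.drop k))
          = sgn w₁ (chk (G.take k)) * sgn w₂ (comp (G.drop k)) :=
        sgn_append (by rw [chk_length, htake G hG]) _ _
      have h2 : sgn w₁ (chk (G.take k)) = sgn w₁ (G.take k) := by
        rw [sgn_chk (by rw [htake G hG])]
        rcases hu with rfl | hu'
        · simp at hk
          simp [hk]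
        · rw [hu']; simp
      have h3 : sgn w₂ (comp (G.drop k)) = - sgn w₂ (G.drop k) := by
        rw [sgn_comp (by rw [hdrop G hG]; omega), Odd.neg_one_pow hv, neg_one_mul]
      have h4 : sgn W G = sgn w₁ (G.take k) * sgn w₂ (G.drop k) := by
        conv_lhs => rw [← List.take_append_drop k G]
        exact sgn_append (by rw [htake G hG]) _ _
      rw [h1, h2, h3, h4]; ring
    calc ∑ G ∈ allWords n, sgn W G * β (σ G)
        = ∑ G ∈ allWords n, (fun G' => sgn W (σ G') * β G') (σ G) := by
          apply Finset.sum_congr rfl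
          intro G hG
          simp only
          rw [hσinv G (mem_allWords.mp hG)]
      _ = ∑ G ∈ allWords n, sgn W (σ G) * β G :=
          sum_invol σ hσlen hσinv (fun G' => sgn W (σ G') * β G')
      _ = - hatb n β W := by
          rw [hatb, ← Finset.sum_neg_distrib]
          apply Finset.sum_congr rfl
          intro G hG
          rw [hsgn G (mem_allWords.mp hG)]
          ring
  rw [S0, SK, SC, SB] at hsum
  linarith

lemma dualBB_of_V {n : ℕ} {β : List Bool → ℚ}
    (hV : ∀ w ∈ allWords n, ¬(goodB w = true) → hatb n β w = 0) : DualBB n β := by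
  intro E F hEF
  have hinv : ∀ G : List Bool, G.length = n →
      (2:ℚ)^n * β G = ∑ w ∈ allWords n, sgn w G * hatb n β w := by
    intro G hG
    calc (2:ℚ)^n * β G
        = ∑ E' ∈ allWords n, if G = E' then (2:ℚ)^n * β E' else 0 := by
          rw [Finset.sum_ite_eq (allWords n) G (fun E' => ((2:ℚ)^n) * β E'),
            if_pos (mem_allWords.mpr hG)]
      _ = ∑ E' ∈ allWords n, (∑ w ∈ allWords n, sgn G w * sgn E' w) * β E' := by
          apply Finset.sum_congr rfl
          intro E' hE'
          rw [orth hG (mem_allWords.mp hE'), ite_mul, zero_mul]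
      _ = ∑ E' ∈ allWords n, ∑ w ∈ allWords n, sgn w G * (sgn w E' * β E') := by
          apply Finset.sum_congr rfl
          intro E' hE'
          rw [Finset.sum_mul]
          apply Finset.sum_congr rfl
          intro w hw
          rw [sgn_comm G w, sgn_comm E' w]
          ring
      _ = ∑ w ∈ allWords n, ∑ E' ∈ allWords n, sgn w G * (sgn w E' * β E') :=
          Finset.sum_comm
      _ = ∑ w ∈ allWords n, sgn w G * hatb n β w := by
          apply Finset.sum_congr rfl
          intro w hw
          rw [hatb, Finset.mul_sum]
  have hne : ((2:ℚ)^n) ≠ 0 := by positivity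
  apply mul_left_cancel₀ hne
  have lEF : (E ++ F).length = n := by simp [hEF]
  have lKF : (chk E ++ F).length = n := by simp [chk_length]; omega
  have lEC : (E ++ comp F).length = n := by simp [comp_length]; omega
  have lKC : (chk E ++ comp F).length = n := by simp [chk_length, comp_length]; omega
  rw [mul_add, mul_add, hinv _ lEF, hinv _ lKF, hinv _ lEC, hinv _ lKC,
    ← Finset.sum_add_distrib, ← Finset.sum_add_distrib]
  apply Finset.sum_congr rfl
  intro w hw
  have hwn : w.length = n := mem_allWords.mp hw
  set k := E.length with hkdef
  have hkn : k ≤ n := by omega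
  have h1len : (w.take k).length = k := by simp [hwn]; omega
  have h2len : (w.drop k).length = F.length := by simp [hwn]; omega
  have t1 : sgn w (E ++ F) = sgn (w.take k) E * sgn (w.drop k) F := by
    conv_lhs => rw [← List.take_append_drop k w]
    exact sgn_append (by rw [h1len]) _ _
  have t2 : sgn w (chk E ++ F)
      = ((if (w.take k).getLast? = some true then (-1:ℚ) else 1)
          * sgn (w.take k) E) * sgn (w.drop k) F := by
    conv_lhs => rw [← List.take_append_drop k w]
    rw [sgn_append (by rw [h1len, chk_length]) _ _, sgn_chk (by rw [h1len])]
  have t3 : sgn w (E ++ comp F)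
      = sgn (w.take k) E * (((-1:ℚ)^((w.drop k).count true)) * sgn (w.drop k) F) := by
    conv_lhs => rw [← List.take_append_drop k w]
    rw [sgn_append (by rw [h1len]) _ _, sgn_comp (by rw [h2len])]
  have t4 : sgn w (chk E ++ comp F)
      = ((if (w.take k).getLast? = some true then (-1:ℚ) else 1) * sgn (w.take k) E)
        * (((-1:ℚ)^((w.drop k).count true)) * sgn (w.drop k) F) := by
    conv_lhs => rw [← List.take_append_drop k w]
    rw [sgn_append (by rw [h1len, chk_length]) _ _, sgn_chk (by rw [h1len]),
      sgn_comp (by rw [h2len])]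
  rw [t1, t2, t3, t4]
  by_cases hgood : goodB w = true
  · by_cases hs1 : (w.take k).getLast? = some true
    · rw [if_pos hs1]
      ring
    · rw [if_neg hs1]
      have hsplit : w.take k = [] ∨ (w.take k).getLast? = some false := by
        rcases hlast : (w.take k).getLast? with _ | b
        · left
          exact List.getLast?_eq_none_iff.mp hlast
        · cases b
          · right; rfl
          · exact absurd hlast hs1
      have hgd : goodB (w.drop k) := by
        refine good_suffix ?_ hsplit
        rw [List.take_append_drop]
        exact hgood
      have hs2 : ((-1:ℚ)^((w.drop k).count true)) = 1 :=
        Even.neg_one_pow (even_count_of_good hgd)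
      rw [hs2]
      ring
  · have h0 : hatb n β w = 0 := hV w hw (by simp [hgood])
    rw [h0]
    ring
theorem mem_adjoin_cd_iff_dualBB (n : ℕ) (hn : 1 ≤ n) (β : List Bool → ℚ) :
    (∑ E ∈ allWords n, β E • mu E) ∈
        Algebra.adjoin ℚ {gena + genb, gena * genb + genb * gena} ↔
      DualBB n β := by
  rw [mem_adjoin_iff, psi'_P n β]
  constructor
  · intro hmem
    apply dualBB_of_V
    intro w hw hbad
    have hc := coeff_zero_of_mem_adjoin hmem hbad
    rw [map_sum] at hc
    have hterm : ∀ v ∈ allWords n,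
        coeffL w (((2⁻¹:ℚ)^n * hatb n β v) • mu v)
          = if v = w then (2⁻¹:ℚ)^n * hatb n β v else 0 := by
      intro v hv
      rw [map_smul, coeffL_mu, smul_eq_mul, mul_ite, mul_one, mul_zero]
    rw [Finset.sum_congr rfl hterm, Finset.sum_ite_eq' (allWords n) w
      (fun v => (2⁻¹:ℚ)^n * hatb n β v), if_pos hw] at hc
    have h2 : ((2⁻¹:ℚ)^n) ≠ 0 := by positivity
    exact (mul_eq_zero.mp hc).resolve_left h2
  · intro hD
    apply Subalgebra.sum_mem
    intro w hw
    by_cases hgood : goodB w = true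
    · exact Subalgebra.smul_mem _ (good_mu_mem hgood) _
    · rw [V_of_dualBB hD hw hgood, mul_zero, zero_smul]
      exact zero_mem _
end

section
/- Let n ≥ 4, let T be a 0-1 word of length n−1, let S be a subset of [n−1] = {1, …, n−1} with n−1 ∈ S, and let i ∈ {2, …, n−2} be such that i−1 ∉ S and i ∉ S. Then h_{S,T} + h_{S∪{i−1,i},T} = h_{S∪{i},T} + h_{S∪{i−1},T}. -/
/-- `S(T)`: the set of (1-indexed) positions of the 1's of the word `T`. -/
def onesSet (T : List Bool) : Finset ℕ :=
  ((Finset.range T.length).filter (fun i => T.getD i false = true)).image (· + 1)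

/-- The increasing list `s_1 < ⋯ < s_t` of positions of the 1's of `T`. -/
def sListOf (T : List Bool) : List ℕ := (onesSet T).sort (· ≤ ·)

/-- `sfun n T j = s_j`, with the conventions `s_0 = 0` and `s_j = n` for `j > t`. -/
def sfun (n : ℕ) (T : List Bool) (j : ℕ) : ℕ :=
  if j = 0 then 0 else (sListOf T).getD (j - 1) n

/-- `tOf T = t`, the number of 1's of `T`. -/
def tOf (T : List Bool) : ℕ := (onesSet T).card

/-- `S ∩ (s_j, s_{j+1})`, the elements of `S` lying strictly between `s_j` and `s_{j+1}`. -/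
def intv (n : ℕ) (T : List Bool) (S : Finset ℕ) (j : ℕ) : Finset ℕ :=
  S.filter (fun x => sfun n T j < x ∧ x < sfun n T (j + 1))

/-- `S ∈ G(T)`: every interval `(s_j, s_{j+1})` with `0 ≤ j ≤ t-1` meets `S`, and any two
elements of `S` in a common interval `(s_j, s_{j+1})`, `0 ≤ j ≤ t`, are congruent mod 2. -/
def memG (n : ℕ) (T : List Bool) (S : Finset ℕ) : Prop :=
  (∀ j < tOf T, (intv n T S j).Nonempty) ∧
    (∀ j ≤ tOf T, ∀ x ∈ intv n T S j, ∀ y ∈ intv n T S j, x % 2 = y % 2)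

/-- `sgn(S,T) = (-1)^(Σ_{j=0}^{t-1} (s_{j+1} - y_j - 1))`, with `y_j` the least element of
`S ∩ (s_j, s_{j+1})` (any choice gives the same value when `S ∈ G(T)`). -/
noncomputable def sgnST (n : ℕ) (T : List Bool) (S : Finset ℕ) : ℚ :=
  (-1 : ℚ) ^ (∑ j ∈ Finset.range (tOf T),
    (sfun n T (j + 1) - WithTop.untopD 0 (intv n T S j).min - 1))

/-- `h_{S,T}`. -/
noncomputable def hST (n : ℕ) (T : List Bool) (S : Finset ℕ) : ℚ :=
  haveI := Classical.propDecidable (memG n T S)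
  if memG n T S then sgnST n T S else 0

/-- `∂(E) = {i ∈ [m-1] : E_i ≠ E_{i+1}} ∪ {m}` for a word `E` of length `m` (1-indexed). -/
def bnd (E : List Bool) : Finset ℕ :=
  ((Finset.Icc 1 (E.length - 1)).filter
      (fun i => E.getD (i - 1) false ≠ E.getD i false)) ∪ {E.length}

/-- A word is sparse if it does not begin with a 1 and has no two consecutive 1's. -/
def Sparse (E : List Bool) : Prop :=
  E.head? ≠ some true ∧ E.Chain' (fun a b => ¬(a = true ∧ b = true))

/-! ### Auxiliary lemmas -/

lemma mem_onesSet_le {T : List Bool} {a : ℕ} (ha : a ∈ onesSet T) : 1 ≤ a ∧ a ≤ T.length := by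
  simp only [onesSet, Finset.mem_image, Finset.mem_filter, Finset.mem_range] at ha
  obtain ⟨b, ⟨hb, _⟩, rfl⟩ := ha
  omega

lemma sListOf_length (T : List Bool) : (sListOf T).length = tOf T := Finset.length_sort _

lemma sfun_zero (n : ℕ) (T : List Bool) : sfun n T 0 = 0 := rfl

lemma sfun_mem {n : ℕ} {T : List Bool} {k : ℕ} (h1 : 1 ≤ k) (h2 : k ≤ tOf T) :
    sfun n T k ∈ onesSet T := by
  have hlen : k - 1 < (sListOf T).length := by rw [sListOf_length]; omega
  rw [sfun, if_neg (by omega), List.getD_eq_getElem _ _ hlen]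
  exact (Finset.mem_sort _).mp (List.getElem_mem _)

lemma exists_sfun {n : ℕ} {T : List Bool} {a : ℕ} (ha : a ∈ onesSet T) :
    ∃ k, 1 ≤ k ∧ k ≤ tOf T ∧ sfun n T k = a := by
  have hmem : a ∈ sListOf T := (Finset.mem_sort _).mpr ha
  obtain ⟨idx, hidx, hval⟩ := List.getElem_of_mem hmem
  refine ⟨idx + 1, by omega, by rw [← sListOf_length T]; omega, ?_⟩
  rw [sfun, if_neg (by omega)]
  simpa using (List.getD_eq_getElem (sListOf T) n (by simpa using hidx)).trans hval

lemma sfun_eq_of_gt {n : ℕ} {T : List Bool} {k : ℕ} (hk : tOf T < k) : sfun n T k = n := by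
  rw [sfun, if_neg (by omega), List.getD_eq_default]
  rw [sListOf_length]; omega

lemma sfun_mono {n : ℕ} {T : List Bool} (hT : T.length ≤ n) : Monotone (sfun n T) := by
  apply monotone_nat_of_le_succ
  intro j
  rcases Nat.eq_zero_or_pos j with rfl | hj
  · rw [sfun_zero]; exact Nat.zero_le _
  have hb : ∀ m, m < (sListOf T).length → (sListOf T).getD m n ≤ n := by
    intro m hm
    rw [List.getD_eq_getElem _ _ hm]
    have := mem_onesSet_le ((Finset.mem_sort _).mp (List.getElem_mem hm))
    omega
  have hg1 : sfun n T j = (sListOf T).getD (j - 1) n := by rw [sfun, if_neg (by omega)]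
  have hg2 : sfun n T (j + 1) = (sListOf T).getD j n := by
    rw [sfun, if_neg (by omega), Nat.add_sub_cancel]
  rw [hg1, hg2]
  by_cases h1 : j < (sListOf T).length
  · rw [List.getD_eq_getElem _ _ (by omega), List.getD_eq_getElem _ _ h1]
    have hs : (sListOf T).Pairwise (· < ·) := (Finset.sortedLT_sort _).pairwise
    exact le_of_lt (List.pairwise_iff_getElem.mp hs _ _ (by omega) h1 (by omega))
  · rw [List.getD_eq_default (sListOf T) n (by omega : (sListOf T).length ≤ j)]
    by_cases h2 : j - 1 < (sListOf T).length
    · exact hb _ h2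
    · rw [List.getD_eq_default _ _ (by omega)]

lemma intv_insert (n : ℕ) (T : List Bool) (S : Finset ℕ) (a j : ℕ) :
    intv n T (insert a S) j =
      if sfun n T j < a ∧ a < sfun n T (j + 1) then insert a (intv n T S j)
      else intv n T S j := by
  simp only [intv, Finset.filter_insert]

lemma not_between {n : ℕ} {T : List Bool} {a : ℕ} (hT : T.length ≤ n)
    (ha : a ∈ onesSet T) (j : ℕ) : ¬(sfun n T j < a ∧ a < sfun n T (j + 1)) := by
  rintro ⟨hlo, hhi⟩
  obtain ⟨k, hk1, hk2, hk3⟩ := exists_sfun (n := n) ha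
  have hmono := sfun_mono (n := n) (T := T) hT
  have h1 : j < k := by
    by_contra h
    have := hmono (le_of_not_gt h : k ≤ j); omega
  have h2 : k < j + 1 := by
    by_contra h
    have := hmono (le_of_not_gt h : j + 1 ≤ k); omega
  omega

lemma hST_insert_of_mem {n : ℕ} {T : List Bool} {a : ℕ} (hT : T.length ≤ n)
    (ha : a ∈ onesSet T) (S : Finset ℕ) : hST n T (insert a S) = hST n T S := by
  have h1 : ∀ j, intv n T (insert a S) j = intv n T S j := fun j => by
    rw [intv_insert, if_neg (not_between hT ha j)]
  have h2 : memG n T (insert a S) ↔ memG n T S := by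
    unfold memG; simp_rw [h1]
  have h3 : sgnST n T (insert a S) = sgnST n T S := by
    unfold sgnST; simp_rw [h1]
  unfold hST
  by_cases h : memG n T S
  · rw [if_pos h, if_pos (h2.mpr h), h3]
  · rw [if_neg h, if_neg (fun hh => h (h2.mp hh))]

lemma min_untop'_mem {s : Finset ℕ} (hs : s.Nonempty) : WithTop.untopD 0 s.min ∈ s := by
  rw [← Finset.coe_min' hs, WithTop.untopD_coe]
  exact s.min'_mem hs

lemma mem_intv {n : ℕ} {T : List Bool} {S : Finset ℕ} {j x : ℕ} :
    x ∈ intv n T S j ↔ x ∈ S ∧ sfun n T j < x ∧ x < sfun n T (j + 1) := by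
  simp [intv]

theorem hST_rel (n : ℕ) (hn : 4 ≤ n) (T : List Bool) (hT : T.length = n - 1)
    (S : Finset ℕ) (hS : S ⊆ Finset.Icc 1 (n - 1)) (hStop : n - 1 ∈ S)
    (i : ℕ) (hi2 : 2 ≤ i) (hin : i ≤ n - 2) (hi1S : i - 1 ∉ S) (hiS : i ∉ S) :
    hST n T S + hST n T (S ∪ {i - 1, i}) =
      hST n T (S ∪ {i}) + hST n T (S ∪ {i - 1}) := by
  have hTn : T.length ≤ n := by omega
  have e1 : S ∪ {i - 1, i} = insert (i - 1) (insert i S) := by ext x; simp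
  have e2 : S ∪ {i} = insert i S := by ext x; simp
  have e3 : S ∪ {i - 1} = insert (i - 1) S := by ext x; simp
  rw [e1, e2, e3]
  by_cases h1 : (i - 1) ∈ onesSet T
  · rw [hST_insert_of_mem hTn h1, hST_insert_of_mem hTn h1]; ring
  by_cases h2 : i ∈ onesSet T
  · have e1' : insert (i - 1) (insert i S) = insert i (insert (i - 1) S) :=
      Finset.insert_comm _ _ _
    rw [e1', hST_insert_of_mem hTn h2, hST_insert_of_mem hTn h2]
  -- Main case: neither i-1 nor i is a position of a 1.
  set j := Nat.findGreatest (fun j => sfun n T j < i - 1) (tOf T) with hjdef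
  have hjt : j ≤ tOf T := Nat.findGreatest_le (tOf T)
  have hPj : sfun n T j < i - 1 := by
    have h0 : sfun n T 0 < i - 1 := by rw [sfun_zero]; omega
    exact Nat.findGreatest_spec (P := fun j => sfun n T j < i - 1)
      (Nat.zero_le (tOf T)) h0
  have hnext : i < sfun n T (j + 1) := by
    rcases eq_or_lt_of_le hjt with heq | hlt
    · rw [sfun_eq_of_gt (by omega)]; omega
    · have hng : ¬ (sfun n T (j + 1) < i - 1) :=
        Nat.findGreatest_is_greatest (P := fun j => sfun n T j < i - 1)
          (n := tOf T) (k := j + 1) (by omega) (by omega)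
      have hmem := sfun_mem (n := n) (T := T) (k := j + 1) (by omega) (by omega)
      have hne1 : sfun n T (j + 1) ≠ i - 1 := fun h => h1 (h ▸ hmem)
      have hne2 : sfun n T (j + 1) ≠ i := fun h => h2 (h ▸ hmem)
      omega
  have hmono := sfun_mono (n := n) (T := T) hTn
  have hins : ∀ a, a = i - 1 ∨ a = i → ∀ S' : Finset ℕ,
      intv n T (insert a S') j = insert a (intv n T S' j) := by
    intro a ha S'
    rw [intv_insert, if_pos]
    rcases ha with rfl | rfl <;> constructor <;> omega
  have houts : ∀ a, a = i - 1 ∨ a = i → ∀ (S' : Finset ℕ) (j'), j' ≠ j →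
      intv n T (insert a S') j' = intv n T S' j' := by
    intro a ha S' j' hne
    rw [intv_insert, if_neg]
    rintro ⟨u1, u2⟩
    rcases lt_or_gt_of_ne hne with hlt | hgt
    · have := hmono (show j' + 1 ≤ j by omega)
      rcases ha with rfl | rfl <;> omega
    · have := hmono (show j + 1 ≤ j' by omega)
      rcases ha with rfl | rfl <;> omega
  have hdouble : ¬ memG n T (insert (i - 1) (insert i S)) := by
    rintro ⟨-, hpar⟩
    have hmem1 : (i - 1) ∈ intv n T (insert (i - 1) (insert i S)) j := by
      rw [hins _ (Or.inl rfl)]; exact Finset.mem_insert_self _ _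
    have hmem2 : i ∈ intv n T (insert (i - 1) (insert i S)) j := by
      rw [hins _ (Or.inl rfl), hins _ (Or.inr rfl)]
      exact Finset.mem_insert_of_mem (Finset.mem_insert_self _ _)
    have := hpar j hjt _ hmem1 _ hmem2
    omega
  by_cases hA : (intv n T S j).Nonempty
  · -- interval j of S is nonempty
    obtain ⟨m, hm⟩ := hA
    by_cases hG : memG n T S
    · obtain ⟨hne, hpar⟩ := hG
      have hall : ∀ x ∈ intv n T S j, x % 2 = m % 2 := fun x hx => hpar j hjt x hx m hm
      have main : ∀ a b : ℕ, (a = i - 1 ∧ b = i ∨ a = i ∧ b = i - 1) → a % 2 = m % 2 →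
          hST n T (insert a S) = hST n T S ∧ hST n T (insert b S) = 0 := by
        intro a b hab hpa
        have haor : a = i - 1 ∨ a = i := by tauto
        have hbor : b = i - 1 ∨ b = i := by tauto
        constructor
        · have hGa : memG n T (insert a S) := by
            constructor
            · intro j' hj'
              by_cases hjj : j' = j
              · subst hjj; rw [hins a haor]
                exact ⟨m, Finset.mem_insert_of_mem hm⟩
              · rw [houts a haor S j' hjj]; exact hne j' hj'
            · intro j' hj' x hx y hy
              by_cases hjj : j' = j
              · subst hjj
                rw [hins a haor] at hx hy
                have key : ∀ z ∈ insert a (intv n T S j), z % 2 = m % 2 := by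
                  intro z hz
                  rcases Finset.mem_insert.mp hz with rfl | hz
                  · exact hpa
                  · exact hall z hz
                rw [key x hx, key y hy]
              · rw [houts a haor S j' hjj] at hx hy
                exact hpar j' hj' x hx y hy
          have hsgn : sgnST n T (insert a S) = sgnST n T S := by
            unfold sgnST
            rw [neg_one_pow_eq_pow_mod_two, neg_one_pow_eq_pow_mod_two
              (n := ∑ j' ∈ Finset.range (tOf T),
                (sfun n T (j' + 1) - WithTop.untopD 0 (intv n T S j').min - 1))]
            congr 1
            rw [Finset.sum_nat_mod, Finset.sum_nat_mod (Finset.range (tOf T)) 2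
              (fun j' => (sfun n T (j' + 1) - WithTop.untopD 0 (intv n T S j').min - 1))]
            congr 1
            apply Finset.sum_congr rfl
            intro j' hj'
            by_cases hjj : j' = j
            · subst hjj
              rw [hins a haor]
              have hAne : (intv n T S j).Nonempty := ⟨m, hm⟩
              have hy1m : WithTop.untopD 0 (intv n T S j).min ∈ intv n T S j :=
                min_untop'_mem hAne
              have hy2m : WithTop.untopD 0 (insert a (intv n T S j)).min ∈
                  insert a (intv n T S j) :=
                min_untop'_mem (Finset.insert_nonempty _ _)
              have hy1p : WithTop.untopD 0 (intv n T S j).min % 2 = m % 2 := hall _ hy1m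
              have hy2p : WithTop.untopD 0 (insert a (intv n T S j)).min % 2 = m % 2 := by
                rcases Finset.mem_insert.mp hy2m with h' | h'
                · rw [h']; exact hpa
                · exact hall _ h'
              have hy1b : WithTop.untopD 0 (intv n T S j).min < sfun n T (j + 1) :=
                (mem_intv.mp hy1m).2.2
              have hy2b : WithTop.untopD 0 (insert a (intv n T S j)).min < sfun n T (j + 1) := by
                rcases Finset.mem_insert.mp hy2m with h' | h'
                · rw [h']; rcases haor with rfl | rfl <;> omega
                · exact (mem_intv.mp h').2.2
              omega
            · rw [houts a haor S j' hjj]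
          unfold hST
          rw [if_pos hGa, if_pos ⟨hne, hpar⟩, hsgn]
        · have hGb : ¬ memG n T (insert b S) := by
            rintro ⟨-, hpar'⟩
            have hm1 : m ∈ intv n T (insert b S) j := by
              rw [hins b hbor]; exact Finset.mem_insert_of_mem hm
            have hm2 : b ∈ intv n T (insert b S) j := by
              rw [hins b hbor]; exact Finset.mem_insert_self _ _
            have := hpar' j hjt m hm1 b hm2
            rcases hab with ⟨rfl, rfl⟩ | ⟨rfl, rfl⟩ <;> omega
          unfold hST
          rw [if_neg hGb]
      by_cases hp : (i - 1) % 2 = m % 2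
      · obtain ⟨ha1, ha2⟩ := main (i - 1) i (Or.inl ⟨rfl, rfl⟩) hp
        rw [ha1, ha2]
        have hd0 : hST n T (insert (i - 1) (insert i S)) = 0 := by
          unfold hST; rw [if_neg hdouble]
        rw [hd0]; ring
      · obtain ⟨ha1, ha2⟩ := main i (i - 1) (Or.inr ⟨rfl, rfl⟩) (by omega)
        have hd0 : hST n T (insert (i - 1) (insert i S)) = 0 := by
          unfold hST; rw [if_neg hdouble]
        rw [ha1, ha2, hd0]
    · -- memG S fails, interval j nonempty: everything is 0
      have hback : ∀ a, a = i - 1 ∨ a = i → ¬ memG n T (insert a S) := by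
        intro a ha hmem
        apply hG
        obtain ⟨hne, hpar⟩ := hmem
        constructor
        · intro j' hj'
          by_cases hjj : j' = j
          · subst hjj; exact ⟨m, hm⟩
          · have := hne j' hj'; rwa [houts a ha S j' hjj] at this
        · intro j' hj' x hx y hy
          by_cases hjj : j' = j
          · subst hjj
            exact hpar j hj' x (by rw [hins a ha]; exact Finset.mem_insert_of_mem hx)
              y (by rw [hins a ha]; exact Finset.mem_insert_of_mem hy)
          · exact hpar j' hj' x (by rwa [houts a ha S j' hjj]) y
              (by rwa [houts a ha S j' hjj])
      unfold hST
      rw [if_neg hG, if_neg hdouble, if_neg (hback _ (Or.inl rfl)),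
        if_neg (hback _ (Or.inr rfl))]
  · -- interval j of S is empty
    have hAe : intv n T S j = ∅ := Finset.not_nonempty_iff_eq_empty.mp hA
    have hjlt : j < tOf T := by
      rcases eq_or_lt_of_le hjt with heq | h
      · exfalso
        have hmem : n - 1 ∈ intv n T S j := by
          rw [mem_intv]
          refine ⟨hStop, by omega, ?_⟩
          rw [sfun_eq_of_gt (show tOf T < j + 1 by omega)]
          omega
        rw [hAe] at hmem
        simp at hmem
      · exact h
    have hGS : ¬ memG n T S := by
      rintro ⟨hne, -⟩
      have := hne j hjlt
      rw [hAe] at this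
      simp [Finset.not_nonempty_empty] at this
    have hiff : ∀ a b : ℕ, (a = i - 1 ∨ a = i) → (b = i - 1 ∨ b = i) →
        memG n T (insert a S) → memG n T (insert b S) := by
      rintro a b ha hb ⟨hne, hpar⟩
      constructor
      · intro j' hj'
        by_cases hjj : j' = j
        · subst hjj; rw [hins b hb]; exact ⟨b, Finset.mem_insert_self _ _⟩
        · rw [houts b hb S j' hjj]
          have := hne j' hj'; rwa [houts a ha S j' hjj] at this
      · intro j' hj' x hx y hy
        by_cases hjj : j' = j
        · subst hjj
          rw [hins b hb, hAe] at hx hy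
          simp only [Finset.mem_insert, Finset.notMem_empty, or_false] at hx hy
          rw [hx, hy]
        · rw [houts b hb S j' hjj] at hx hy
          exact hpar j' hj' x (by rw [houts a ha S j' hjj]; exact hx) y
            (by rw [houts a ha S j' hjj]; exact hy)
    by_cases hQ : memG n T (insert i S)
    · have hQ' : memG n T (insert (i - 1) S) := hiff i (i - 1) (Or.inr rfl) (Or.inl rfl) hQ
      have hsum : (∑ j' ∈ Finset.range (tOf T),
            (sfun n T (j' + 1) - WithTop.untopD 0 (intv n T (insert (i - 1) S) j').min - 1))
          = (∑ j' ∈ Finset.range (tOf T),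
            (sfun n T (j' + 1) - WithTop.untopD 0 (intv n T (insert i S) j').min - 1)) + 1 := by
        rw [← Finset.sum_erase_add _ _ (Finset.mem_range.mpr hjlt),
          ← Finset.sum_erase_add _ _ (Finset.mem_range.mpr hjlt)]
        have hcong : ∀ j' ∈ (Finset.range (tOf T)).erase j,
            (sfun n T (j' + 1) - WithTop.untopD 0 (intv n T (insert (i - 1) S) j').min - 1)
            = (sfun n T (j' + 1) - WithTop.untopD 0 (intv n T (insert i S) j').min - 1) := by
          intro j' hj'
          have hjj : j' ≠ j := (Finset.mem_erase.mp hj').1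
          rw [houts _ (Or.inl rfl) S j' hjj, houts _ (Or.inr rfl) S j' hjj]
        rw [Finset.sum_congr rfl hcong]
        have hv1 : intv n T (insert (i - 1) S) j = {i - 1} := by
          rw [hins _ (Or.inl rfl), hAe]; rfl
        have hv2 : intv n T (insert i S) j = {i} := by
          rw [hins _ (Or.inr rfl), hAe]; rfl
        rw [hv1, hv2]
        have hm1 : WithTop.untopD 0 ({i - 1} : Finset ℕ).min = i - 1 := by
          rw [Finset.min_singleton, WithTop.untopD_coe]
        have hm2 : WithTop.untopD 0 ({i} : Finset ℕ).min = i := by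
          rw [Finset.min_singleton, WithTop.untopD_coe]
        rw [hm1, hm2]
        omega
      unfold hST
      rw [if_neg hGS, if_neg hdouble, if_pos hQ, if_pos hQ']
      unfold sgnST
      rw [hsum, pow_succ]
      ring
    · have hQ' : ¬ memG n T (insert (i - 1) S) := fun h =>
        hQ (hiff (i - 1) i (Or.inl rfl) (Or.inr rfl) h)
      unfold hST
      rw [if_neg hGS, if_neg hdouble, if_neg hQ, if_neg hQ']
end

section
/- Let V = ℝ^l with standard basis α_1, …, α_l, and write x_i(v) for the i-th coordinate of v ∈ V. Let Φ⁺ ⊆ V be a set of nonzero vectors, each with all coordinates nonnegative, such that no two distinct elements of Φ⁺ are positive scalar multiples of each other. Let p : V → ℝ be a linear functional with p(β) ≥ 0 for all β ∈ Φ⁺, let Φ₀⁺ = {β ∈ Φ⁺ : p(β) = 0}, and let ≺ be a strict total order on Φ₀⁺ which is a reflection ordering on Φ₀⁺. Define the relation ≪ on Φ⁺ by: β ≪ β' if and only if either (p(β) = p(β') = 0 and β ≺ β'), or (p(β) ≠ 0 and p(β') = 0), or (p(β) ≠ 0, p(β') ≠ 0, and β/p(β) <_lex β'/p(β')), where v <_lex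 w means that for some k, x_k(v) < x_k(w) and x_m(v) = x_m(w) for all m < k. Then ≪ is a strict total order on Φ⁺ which is a reflection ordering on Φ⁺. -/
/-- `r` is a strict total order on `Ψ` which is a reflection ordering on `Ψ`: it is
irreflexive, transitive and total on `Ψ`, and whenever `β, β₁, β₂ ∈ Ψ`, `c₁, c₂ > 0`,
`β = c₁ • β₁ + c₂ • β₂` and `r β₁ β₂`, then `r β₁ β` and `r β β₂`. -/
def IsReflectionOrdering {l : ℕ} (Ψ : Set (Fin l → ℝ))
    (r : (Fin l → ℝ) → (Fin l → ℝ) → Prop) : Prop :=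
  (∀ x ∈ Ψ, ¬r x x) ∧
  (∀ x ∈ Ψ, ∀ y ∈ Ψ, ∀ z ∈ Ψ, r x y → r y z → r x z) ∧
  (∀ x ∈ Ψ, ∀ y ∈ Ψ, x ≠ y → r x y ∨ r y x) ∧
  (∀ β ∈ Ψ, ∀ β₁ ∈ Ψ, ∀ β₂ ∈ Ψ, ∀ c₁ c₂ : ℝ, 0 < c₁ → 0 < c₂ →
    β = c₁ • β₁ + c₂ • β₂ → r β₁ β₂ → r β₁ β ∧ r β β₂)

/-- Lexicographic order on `ℝ^l` with respect to the standard coordinates. -/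
def lexLt {l : ℕ} (v w : Fin l → ℝ) : Prop :=
  ∃ k : Fin l, v k < w k ∧ ∀ m : Fin l, m < k → v m = w m

lemma lexLt_irrefl {l : ℕ} (v : Fin l → ℝ) : ¬ lexLt v v := by
  rintro ⟨k, hk, -⟩; exact lt_irrefl _ hk

lemma lexLt_trans {l : ℕ} {u v w : Fin l → ℝ} (h1 : lexLt u v) (h2 : lexLt v w) :
    lexLt u w := by
  obtain ⟨k1, hk1, he1⟩ := h1
  obtain ⟨k2, hk2, he2⟩ := h2
  rcases lt_trichotomy k1 k2 with h | h | h
  · exact ⟨k1, by rw [← he2 k1 h]; exact hk1, fun m hm => (he1 m hm).trans (he2 m (hm.trans h))⟩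
  · subst h; exact ⟨k1, hk1.trans hk2, fun m hm => (he1 m hm).trans (he2 m hm)⟩
  · exact ⟨k2, by rw [he1 k2 h]; exact hk2, fun m hm => (he1 m (hm.trans h)).trans (he2 m hm)⟩

lemma lexLt_trichotomy {l : ℕ} {u v : Fin l → ℝ} (h : u ≠ v) : lexLt u v ∨ lexLt v u := by
  have hne : (Finset.univ.filter fun i => u i ≠ v i).Nonempty := by
    by_contra hc
    apply h
    funext i
    by_contra hi
    exact hc ⟨i, Finset.mem_filter.2 ⟨Finset.mem_univ i, hi⟩⟩
  obtain ⟨k, hkmem, hkmin⟩ := Finset.exists_min_image _ id hne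
  have hk : u k ≠ v k := (Finset.mem_filter.1 hkmem).2
  have heq : ∀ m : Fin l, m < k → u m = v m := by
    intro m hm
    by_contra hc
    exact absurd (hkmin m (Finset.mem_filter.2 ⟨Finset.mem_univ m, hc⟩)) (not_le.2 hm)
  rcases lt_or_gt_of_ne hk with h' | h'
  · exact Or.inl ⟨k, h', heq⟩
  · exact Or.inr ⟨k, h', fun m hm => (heq m hm).symm⟩

lemma lexLt_of_le_of_ne {l : ℕ} {u v : Fin l → ℝ} (hle : ∀ i, u i ≤ v i) (h : u ≠ v) :
    lexLt u v := by
  rcases lexLt_trichotomy h with h' | h'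
  · exact h'
  · obtain ⟨k, hk, -⟩ := h'
    exact absurd (hle k) (not_le.2 hk)

theorem reflection_ordering_construction (l : ℕ) (Φ : Set (Fin l → ℝ))
    (hΦ : ∀ β ∈ Φ, β ≠ 0 ∧ ∀ i : Fin l, 0 ≤ β i)
    (hmul : ∀ β ∈ Φ, ∀ β' ∈ Φ, ∀ c : ℝ, 0 < c → β = c • β' → β = β')
    (p : (Fin l → ℝ) →ₗ[ℝ] ℝ) (hp : ∀ β ∈ Φ, 0 ≤ p β)
    (prec : (Fin l → ℝ) → (Fin l → ℝ) → Prop)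
    (hprec : IsReflectionOrdering {β ∈ Φ | p β = 0} prec) :
    IsReflectionOrdering Φ (fun β β' =>
      (p β = 0 ∧ p β' = 0 ∧ prec β β') ∨
      (p β ≠ 0 ∧ p β' = 0) ∨
      (p β ≠ 0 ∧ p β' ≠ 0 ∧ lexLt ((p β)⁻¹ • β) ((p β')⁻¹ • β'))) := by
  obtain ⟨hirr, htrans, htot, hrefl⟩ := hprec
  have hpos : ∀ β ∈ Φ, p β ≠ 0 → 0 < p β := fun β hβ h => lt_of_le_of_ne (hp β hβ) (Ne.symm h)
  refine ⟨?_, ?_, ?_, ?_⟩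
  · -- irreflexivity
    rintro x hx (⟨h1, -, h3⟩ | ⟨h1, h2⟩ | ⟨-, -, h3⟩)
    · exact hirr x ⟨hx, h1⟩ h3
    · exact h1 h2
    · exact lexLt_irrefl _ h3
  · -- transitivity
    rintro x hx y hy z hz (⟨hx0, hy0, hxy⟩ | ⟨hx0, hy0⟩ | ⟨hx0, hy0, hxy⟩)
      (⟨hy0', hz0, hyz⟩ | ⟨hy0', hz0⟩ | ⟨hy0', hz0, hyz⟩)
    · exact Or.inl ⟨hx0, hz0, htrans x ⟨hx, hx0⟩ y ⟨hy, hy0⟩ z ⟨hz, hz0⟩ hxy hyz⟩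
    · exact absurd hy0 hy0'
    · exact absurd hy0 hy0'
    · exact Or.inr (Or.inl ⟨hx0, hz0⟩)
    · exact absurd hy0 hy0'
    · exact absurd hy0 hy0'
    · exact absurd hy0' hy0
    · exact Or.inr (Or.inl ⟨hx0, hz0⟩)
    · exact Or.inr (Or.inr ⟨hx0, hz0, lexLt_trans hxy hyz⟩)
  · -- totality
    intro x hx y hy hne
    by_cases hx0 : p x = 0 <;> by_cases hy0 : p y = 0
    · rcases htot x ⟨hx, hx0⟩ y ⟨hy, hy0⟩ hne with h | h
      · exact Or.inl (Or.inl ⟨hx0, hy0, h⟩)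
      · exact Or.inr (Or.inl ⟨hy0, hx0, h⟩)
    · exact Or.inr (Or.inr (Or.inl ⟨hy0, hx0⟩))
    · exact Or.inl (Or.inr (Or.inl ⟨hx0, hy0⟩))
    · have hvne : (p x)⁻¹ • x ≠ (p y)⁻¹ • y := by
        intro h
        have hpx := hpos x hx hx0
        have hpy := hpos y hy hy0
        have hx' : x = (p x * (p y)⁻¹) • y := by
          calc x = (p x) • ((p x)⁻¹ • x) := by rw [smul_smul, mul_inv_cancel₀ hx0, one_smul]
          _ = (p x) • ((p y)⁻¹ • y) := by rw [h]
          _ = (p x * (p y)⁻¹) • y := by rw [smul_smul]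
        exact hne (hmul x hx y hy _ (by positivity) hx')
      rcases lexLt_trichotomy hvne with h | h
      · exact Or.inl (Or.inr (Or.inr ⟨hx0, hy0, h⟩))
      · exact Or.inr (Or.inr (Or.inr ⟨hy0, hx0, h⟩))
  · -- reflection ordering property
    intro β hβ β₁ hβ₁ β₂ hβ₂ c₁ c₂ hc₁ hc₂ hsum hr
    have hpβ : p β = c₁ * p β₁ + c₂ * p β₂ := by
      rw [hsum]; simp [mul_comm]
    rcases hr with ⟨h10, h20, h12⟩ | ⟨h10, h20⟩ | ⟨h10, h20, h12⟩
    · -- both in Φ₀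
      have hβ0 : p β = 0 := by rw [hpβ, h10, h20]; ring
      have := hrefl β ⟨hβ, hβ0⟩ β₁ ⟨hβ₁, h10⟩ β₂ ⟨hβ₂, h20⟩ c₁ c₂ hc₁ hc₂ hsum h12
      exact ⟨Or.inl ⟨h10, hβ0, this.1⟩, Or.inl ⟨hβ0, h20, this.2⟩⟩
    · -- p β₁ ≠ 0, p β₂ = 0
      have hp1 : 0 < p β₁ := hpos β₁ hβ₁ h10
      have hβp : 0 < p β := by rw [hpβ, h20]; positivity
      constructor
      · refine Or.inr (Or.inr ⟨h10, hβp.ne', ?_⟩)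
        have hcoord : ∀ i : Fin l, (p β)⁻¹ * β i
            = (p β₁)⁻¹ * β₁ i + (c₁ * p β₁)⁻¹ * (c₂ * β₂ i) := by
          intro i
          have hβi : β i = c₁ * β₁ i + c₂ * β₂ i := by rw [hsum]; simp
          rw [hβi, hpβ, h20, mul_zero, add_zero]
          field_simp
        apply lexLt_of_le_of_ne
        · intro i
          have h2i : 0 ≤ β₂ i := (hΦ β₂ hβ₂).2 i
          simp only [Pi.smul_apply, smul_eq_mul]
          rw [hcoord i]
          have : 0 ≤ (c₁ * p β₁)⁻¹ * (c₂ * β₂ i) := by positivity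
          linarith
        · obtain ⟨i, hi⟩ := Function.ne_iff.1 (hΦ β₂ hβ₂).1
          have h2i : 0 < β₂ i := lt_of_le_of_ne ((hΦ β₂ hβ₂).2 i) (Ne.symm (by simpa using hi))
          intro h
          have hci := congrFun h i
          simp only [Pi.smul_apply, smul_eq_mul] at hci
          rw [hcoord i] at hci
          have : 0 < (c₁ * p β₁)⁻¹ * (c₂ * β₂ i) := by positivity
          linarith
      · exact Or.inr (Or.inl ⟨hβp.ne', h20⟩)
    · -- both p nonzero, lex case
      have hp1 : 0 < p β₁ := hpos β₁ hβ₁ h10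
      have hp2 : 0 < p β₂ := hpos β₂ hβ₂ h20
      have hβp : 0 < p β := by rw [hpβ]; positivity
      obtain ⟨k, hk, heq⟩ := h12
      have key : ∀ i : Fin l, (p β)⁻¹ * β i =
          (c₁ * p β₁ / p β) * ((p β₁)⁻¹ * β₁ i) + (c₂ * p β₂ / p β) * ((p β₂)⁻¹ * β₂ i) := by
        intro i
        have hβi : β i = c₁ * β₁ i + c₂ * β₂ i := by rw [hsum]; simp
        rw [hβi]
        field_simp
      have habsum : c₁ * p β₁ / p β + c₂ * p β₂ / p β = 1 := by
        field_simp [hpβ]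
        exact hpβ.symm
      have ha : 0 < c₁ * p β₁ / p β := by positivity
      have hb : 0 < c₂ * p β₂ / p β := by positivity
      simp only [Pi.smul_apply, smul_eq_mul] at hk heq
      set a := c₁ * p β₁ / p β with ha_def
      set b := c₂ * p β₂ / p β with hb_def
      have hmid : ∀ x : ℝ, a * x + b * x = x := by
        intro x; rw [← add_mul, habsum, one_mul]
      constructor
      · refine Or.inr (Or.inr ⟨h10, hβp.ne', ⟨k, ?_, ?_⟩⟩)
        · simp only [Pi.smul_apply, smul_eq_mul]
          rw [key k]
          have := mul_lt_mul_of_pos_left hk hb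
          linarith [hmid ((p β₁)⁻¹ * β₁ k)]
        · intro m hm
          simp only [Pi.smul_apply, smul_eq_mul]
          rw [key m, heq m hm]
          linarith [hmid ((p β₂)⁻¹ * β₂ m)]
      · refine Or.inr (Or.inr ⟨hβp.ne', h20, ⟨k, ?_, ?_⟩⟩)
        · simp only [Pi.smul_apply, smul_eq_mul]
          rw [key k]
          have := mul_lt_mul_of_pos_left hk ha
          linarith [hmid ((p β₂)⁻¹ * β₂ k)]
        · intro m hm
          simp only [Pi.smul_apply, smul_eq_mul]
          rw [key m, heq m hm]
          linarith [hmid ((p β₂)⁻¹ * β₂ m)]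
end

section
/- With the notation of the 3-complete setup, let u ∈ W' and let i, j ∈ {2, …, l} with i ≠ j. Then (a) d_i(s_i u) = −d_i(u), and (b) d_j(s_i u) = d_i(u) + d_j(u). -/
lemma pi_single_decomp {l : ℕ} (v : Fin l → ℝ) :
    v = ∑ k, v k • (Pi.single k 1 : Fin l → ℝ) := by
  ext j
  simp [Finset.sum_apply, Pi.single_apply]

lemma refl_coords {l : ℕ} {W : Type*} [Group W]
    (ρ : W →* Module.End ℝ (Fin l → ℝ)) (s : W) (i : Fin l)
    (h1 : (ρ s) (Pi.single i (1 : ℝ)) = -Pi.single i 1)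
    (h2 : ∀ j : Fin l, j ≠ i → (ρ s) (Pi.single j (1 : ℝ)) = Pi.single i 1 + Pi.single j 1)
    (v : Fin l → ℝ) :
    (ρ s) v i = -v i + ∑ k ∈ Finset.univ.erase i, v k ∧
      ∀ j : Fin l, j ≠ i → (ρ s) v j = v j := by
  have hv : (ρ s) v = ∑ k, v k • (ρ s) ((Pi.single k 1 : Fin l → ℝ)) := by
    conv_lhs => rw [pi_single_decomp v]
    rw [map_sum]
    simp [map_smul]
  rw [← Finset.add_sum_erase _ _ (Finset.mem_univ i), h1] at hv
  have hv2 : (ρ s) v = v i • (-Pi.single i 1 : Fin l → ℝ)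
      + ∑ k ∈ Finset.univ.erase i, v k • ((Pi.single i 1 : Fin l → ℝ) + Pi.single k 1) := by
    rw [hv]
    congr 1
    apply Finset.sum_congr rfl
    intro k hk
    rw [h2 k (Finset.ne_of_mem_erase hk)]
  constructor
  · rw [hv2]
    simp only [Pi.add_apply, Finset.sum_apply, Pi.smul_apply, Pi.neg_apply, smul_eq_mul,
      Pi.single_eq_same, mul_neg, mul_one]
    congr 1
    apply Finset.sum_congr rfl
    intro k hk
    simp [Pi.single_eq_of_ne (Ne.symm (Finset.ne_of_mem_erase hk))]
  · intro j hj
    rw [hv2]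
    simp only [Pi.add_apply, Finset.sum_apply, Pi.smul_apply, Pi.neg_apply, smul_eq_mul]
    rw [Finset.sum_eq_single j]
    · simp [Pi.single_eq_of_ne hj]
    · intro k hk hkj
      simp [Pi.single_eq_of_ne hj, Pi.single_eq_of_ne (Ne.symm hkj)]
    · intro h; exact absurd (Finset.mem_erase.mpr ⟨hj, Finset.mem_univ j⟩) h


/-- `c_k(w)`: the `k`-th coordinate of `ρ(w)(α_{i0})`, where `α_{i0}` is the `i0`-th
standard basis vector. -/
noncomputable def coeffc {l : ℕ} {W : Type*} [Group W]
    (ρ : W →* Module.End ℝ (Fin l → ℝ)) (i0 : Fin l) (w : W) (k : Fin l) : ℝ :=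
  ρ w (Pi.single i0 1) k

/-- `d_i(w) = 2 c_i(w) - Σ_{k ≠ i} c_k(w)`. -/
noncomputable def coeffd {l : ℕ} {W : Type*} [Group W]
    (ρ : W →* Module.End ℝ (Fin l → ℝ)) (i0 : Fin l) (w : W) (i : Fin l) : ℝ :=
  2 * coeffc ρ i0 w i - ∑ k ∈ Finset.univ.erase i, coeffc ρ i0 w k

theorem coeffd_recursion (l : ℕ) (hl : 2 ≤ l) (M : CoxeterMatrix (Fin l))
    (hM : ∀ i j : Fin l, M.M i j = if i = j then 1 else 3)
    (W : Type*) [Group W] (cs : CoxeterSystem M W)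
    (ρ : W →* Module.End ℝ (Fin l → ℝ))
    (hρ : ∀ i : Fin l,
      (ρ (cs.simple i)) (Pi.single i (1 : ℝ)) = -Pi.single i 1 ∧
      ∀ j : Fin l, j ≠ i →
        (ρ (cs.simple i)) (Pi.single j (1 : ℝ)) = Pi.single i 1 + Pi.single j 1)
    (i0 : Fin l) (hi0 : (i0 : ℕ) = 0)
    (u : W) (hu : u ∈ Subgroup.closure {w : W | ∃ i : Fin l, i ≠ i0 ∧ w = cs.simple i})
    (i j : Fin l) (hi : i ≠ i0) (hj : j ≠ i0) (hij : i ≠ j) :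
    coeffd ρ i0 (cs.simple i * u) i = -coeffd ρ i0 u i ∧
      coeffd ρ i0 (cs.simple i * u) j = coeffd ρ i0 u i + coeffd ρ i0 u j := by
  obtain ⟨hρ1, hρ2⟩ := hρ i
  set g : Fin l → ℝ := (ρ u) (Pi.single i0 1) with hg
  obtain ⟨hci, hck⟩ := refl_coords ρ (cs.simple i) i hρ1 hρ2 g
  have hmul : ∀ k : Fin l, coeffc ρ i0 (cs.simple i * u) k = (ρ (cs.simple i)) g k := by
    intro k
    simp only [coeffc, map_mul, Module.End.mul_apply, hg]
  have hcu : ∀ k, coeffc ρ i0 u k = g k := fun k => rfl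
  have hiS : ∑ k ∈ Finset.univ.erase i, coeffc ρ i0 (cs.simple i * u) k
      = ∑ k ∈ Finset.univ.erase i, g k := by
    refine Finset.sum_congr rfl fun k hk => ?_
    rw [hmul k, hck k (Finset.ne_of_mem_erase hk)]
  constructor
  · simp only [coeffd, hcu, hiS, hmul i, hci]
    ring
  · have hmemi : i ∈ Finset.univ.erase j := Finset.mem_erase.mpr ⟨hij, Finset.mem_univ i⟩
    have hmemj : j ∈ Finset.univ.erase i := Finset.mem_erase.mpr ⟨hij.symm, Finset.mem_univ j⟩
    have hS1 : ∑ k ∈ Finset.univ.erase j, coeffc ρ i0 (cs.simple i * u) k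
        = (-g i + ∑ k ∈ Finset.univ.erase i, g k)
          + ∑ k ∈ (Finset.univ.erase j).erase i, g k := by
      rw [← Finset.add_sum_erase _ _ hmemi, hmul i, hci]
      congr 1
      refine Finset.sum_congr rfl fun k hk => ?_
      rw [hmul k, hck k (Finset.ne_of_mem_erase hk)]
    have hS2 : ∑ k ∈ Finset.univ.erase j, g k
        = g i + ∑ k ∈ (Finset.univ.erase j).erase i, g k :=
      (Finset.add_sum_erase _ _ hmemi).symm
    have hS3 : ∑ k ∈ Finset.univ.erase i, g k
        = g j + ∑ k ∈ (Finset.univ.erase i).erase j, g k :=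
      (Finset.add_sum_erase _ _ hmemj).symm
    have hcomm : (Finset.univ.erase i).erase j = (Finset.univ.erase j).erase i :=
      Finset.erase_right_comm
    simp only [coeffd, hcu]
    rw [hmul j, hck j hij.symm, hS1, hS2, hS3, hcomm]
    ring
end
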